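/- arXiv:1407.6416 — 5 statements merged into one kernel-verified Lean document; each statement's English description precedes it below -/
import Mathlib

section
/- Let G be a connected finite weighted graph with positive edge weights, and let u and v be two vertices of G that have a common distance-preserving spanning tree T in G. Let P = (u = v_0, v_1, ..., v_k = v) be the unique shortest u-v path in G. Then for every vertex x of G there exists a unique vertex v_i on P such that d_G(x, v_i) = d_G(x, V(P)). -/
open SimpleGraph

/-- The weighted length of a walk: the sum of the weights of its edges. -/
def SimpleGraph.Walk.wlength {V : Type*} {G : SimpleGraph V} (w : V → V → ℝ) {x y : V}
    (p : G.Walk x y) : ℝ :=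
  (p.darts.map fun d => w d.toProd.1 d.toProd.2).sum

/-- The weighted distance between two vertices: the minimum weighted length of a walk. -/
noncomputable def SimpleGraph.wdist {V : Type*} (G : SimpleGraph V) (w : V → V → ℝ)
    (x y : V) : ℝ :=
  sInf {r : ℝ | ∃ p : G.Walk x y, p.wlength w = r}

/-- The weighted distance from a vertex to a set of vertices. -/
noncomputable def SimpleGraph.wdistS {V : Type*} (G : SimpleGraph V) (w : V → V → ℝ)
    (x : V) (S : Set V) : ℝ :=
  sInf (G.wdist w x '' S)

/-- `Vset G w P i` is the set of vertices whose nearest vertex on the walk `P` is `P.getVert i`,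
i.e. `V_i = {x : d_G(x, v_i) = d_G(x, V(P))}`. -/
def Vset {V : Type*} (G : SimpleGraph V) (w : V → V → ℝ) {u v : V} (P : G.Walk u v)
    (i : ℕ) : Set V :=
  {x : V | G.wdist w x (P.getVert i) = G.wdistS w x {z | z ∈ P.support}}


namespace SimpleGraph
variable {V : Type*} {G : SimpleGraph V} {w : V → V → ℝ}

lemma Walk.wlength_nil {x : V} : (Walk.nil : G.Walk x x).wlength w = 0 := rfl

lemma Walk.wlength_cons {x y z : V} (h : G.Adj x y) (p : G.Walk y z) :
    (Walk.cons h p).wlength w = w x y + p.wlength w := by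
  simp [Walk.wlength]

lemma Walk.wlength_append {x y z : V} (p : G.Walk x y) (q : G.Walk y z) :
    (p.append q).wlength w = p.wlength w + q.wlength w := by
  simp [Walk.wlength, Walk.darts_append]

lemma Walk.wlength_reverse (hsymm : ∀ a b : V, w a b = w b a) {x y : V} (p : G.Walk x y) :
    p.reverse.wlength w = p.wlength w := by
  simp only [Walk.wlength, Walk.darts_reverse, List.map_reverse, List.sum_reverse,
    List.map_map]
  congr 1
  ext d
  simp [Dart.symm, hsymm]

lemma Walk.wlength_mapLe {T : SimpleGraph V} (hTG : T ≤ G) {x y : V} (p : T.Walk x y) :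
    (p.mapLe hTG).wlength w = p.wlength w := by
  induction p with
  | nil => rfl
  | cons h p ih =>
    simp only [Walk.mapLe, Walk.map_cons] at *
    rw [Walk.wlength_cons, Walk.wlength_cons, ih]
    rfl

lemma Walk.support_mapLe {T : SimpleGraph V} (hTG : T ≤ G) {x y : V} (p : T.Walk x y) :
    (p.mapLe hTG).support = p.support := by
  simp only [Walk.mapLe, Walk.support_map]
  exact List.map_id _

lemma Walk.wlength_nonneg (hpos : ∀ a b : V, G.Adj a b → 0 < w a b) {x y : V}
    (p : G.Walk x y) : 0 ≤ p.wlength w := by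
  apply List.sum_nonneg
  intro r hr
  simp only [List.mem_map] at hr
  obtain ⟨d, hd, rfl⟩ := hr
  exact (hpos _ _ d.adj).le

lemma wdist_bddBelow (hpos : ∀ a b : V, G.Adj a b → 0 < w a b) (x y : V) :
    BddBelow {r : ℝ | ∃ p : G.Walk x y, p.wlength w = r} :=
  ⟨0, fun r ⟨p, hp⟩ => hp ▸ Walk.wlength_nonneg hpos p⟩

lemma wdist_le (hpos : ∀ a b : V, G.Adj a b → 0 < w a b) {x y : V} (p : G.Walk x y) :
    G.wdist w x y ≤ p.wlength w :=
  csInf_le (wdist_bddBelow hpos x y) ⟨p, rfl⟩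

lemma wdist_nonneg (x y : V) (hpos : ∀ a b : V, G.Adj a b → 0 < w a b) :
    0 ≤ G.wdist w x y :=
  Real.sInf_nonneg (fun r ⟨p, hp⟩ => hp ▸ Walk.wlength_nonneg hpos p)

end SimpleGraph

namespace SimpleGraph
variable {V : Type*} {G : SimpleGraph V} {w : V → V → ℝ}

lemma exists_path_le (hpos : ∀ a b : V, G.Adj a b → 0 < w a b) {x y : V} (p : G.Walk x y) :
    ∃ q : G.Walk x y, q.IsPath ∧ q.support ⊆ p.support ∧ q.wlength w ≤ p.wlength w := by
  classical
  induction p with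
  | nil => exact ⟨Walk.nil, Walk.IsPath.nil, List.Subset.refl _, le_refl _⟩
  | @cons x a y h p ih =>
    obtain ⟨q, hq, hsub, hle⟩ := ih
    by_cases hx : x ∈ q.support
    · refine ⟨q.dropUntil x hx, hq.dropUntil hx, ?_, ?_⟩
      · intro z hz
        rw [Walk.support_cons]
        exact List.mem_cons_of_mem _ (hsub ((Walk.support_dropUntil_subset q hx) hz))
      · have hsplit := congrArg (Walk.wlength w) (q.take_spec hx)
        rw [Walk.wlength_append] at hsplit
        have h1 : 0 ≤ (q.takeUntil x hx).wlength w := Walk.wlength_nonneg hpos _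
        have h2 : 0 ≤ w x a := (hpos _ _ h).le
        rw [Walk.wlength_cons]
        linarith
    · refine ⟨Walk.cons h q, ?_, ?_, ?_⟩
      · rw [Walk.cons_isPath_iff]; exact ⟨hq, hx⟩
      · intro z hz
        rw [Walk.support_cons] at hz ⊢
        rcases List.mem_cons.1 hz with rfl | hz
        · exact List.mem_cons_self
        · exact List.mem_cons_of_mem _ (hsub hz)
      · rw [Walk.wlength_cons, Walk.wlength_cons]
        linarith

lemma exists_shortest (hG : G.Connected) [Fintype V]
    (hpos : ∀ a b : V, G.Adj a b → 0 < w a b) (x y : V) :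
    ∃ p : G.Walk x y, p.IsPath ∧ p.wlength w = G.wdist w x y := by
  classical
  have hne : Nonempty (G.Walk x y) := (hG.preconnected x y).elim (fun p => ⟨p⟩)
  obtain ⟨p0⟩ := hne
  set S := {r : ℝ | ∃ p : G.Walk x y, p.wlength w = r} with hS
  set SP := {r : ℝ | ∃ p : G.Walk x y, p.IsPath ∧ p.wlength w = r} with hSP
  have hSPfin : SP.Finite := by
    have : SP = Set.range (fun q : G.Path x y => (q : G.Walk x y).wlength w) := by
      ext r
      constructor
      · rintro ⟨p, hp, rfl⟩; exact ⟨⟨p, hp⟩, rfl⟩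
      · rintro ⟨⟨p, hp⟩, rfl⟩; exact ⟨p, hp, rfl⟩
    rw [this]
    exact Set.finite_range _
  obtain ⟨q0, hq0, _, _⟩ := exists_path_le hpos p0
  have hSPne : SP.Nonempty := ⟨q0.wlength w, q0, hq0, rfl⟩
  have hSne : S.Nonempty := ⟨p0.wlength w, p0, rfl⟩
  have hmem : sInf SP ∈ SP := hSPne.csInf_mem hSPfin
  obtain ⟨p, hp, hpl⟩ := hmem
  refine ⟨p, hp, ?_⟩
  rw [hpl]
  have hdist : G.wdist w x y = sInf S := rfl
  rw [hdist]
  apply le_antisymm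
  · exact le_csInf hSne (fun r hr => by
      obtain ⟨q, hq⟩ := hr
      obtain ⟨q', hq', _, hle⟩ := exists_path_le hpos q
      exact (csInf_le hSPfin.bddBelow ⟨q', hq', rfl⟩).trans (hq ▸ hle))
  · exact csInf_le_csInf (wdist_bddBelow hpos x y) hSPne
      (fun r => fun ⟨q, hq, hql⟩ => ⟨q, hql⟩)

lemma wdist_comm (hsymm : ∀ a b : V, w a b = w b a) (x y : V) :
    G.wdist w x y = G.wdist w y x := by
  have hset : {r : ℝ | ∃ p : G.Walk x y, p.wlength w = r}
      = {r : ℝ | ∃ p : G.Walk y x, p.wlength w = r} := by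
    ext r
    constructor
    · rintro ⟨p, rfl⟩; exact ⟨p.reverse, Walk.wlength_reverse hsymm p⟩
    · rintro ⟨p, rfl⟩; exact ⟨p.reverse, Walk.wlength_reverse hsymm p⟩
  unfold SimpleGraph.wdist
  rw [hset]

lemma wdist_triangle (hG : G.Connected) [Fintype V]
    (hpos : ∀ a b : V, G.Adj a b → 0 < w a b) (x y z : V) :
    G.wdist w x z ≤ G.wdist w x y + G.wdist w y z := by
  obtain ⟨p, _, hp⟩ := exists_shortest hG hpos x y
  obtain ⟨q, _, hq⟩ := exists_shortest hG hpos y z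
  calc G.wdist w x z ≤ (p.append q).wlength w := wdist_le hpos _
    _ = G.wdist w x y + G.wdist w y z := by rw [Walk.wlength_append, hp, hq]

lemma wdist_pos (hG : G.Connected) [Fintype V] (hsymm : ∀ a b : V, w a b = w b a)
    (hpos : ∀ a b : V, G.Adj a b → 0 < w a b) {x y : V} (hne : x ≠ y) :
    0 < G.wdist w x y := by
  classical
  obtain ⟨p0⟩ : Nonempty (G.Walk x y) := (hG.preconnected x y).elim (fun p => ⟨p⟩)
  set s : Finset (V × V) := Finset.univ.filter (fun pr => G.Adj pr.1 pr.2) with hs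
  have hsne : s.Nonempty := by
    cases p0 with
    | nil => exact absurd rfl hne
    | @cons _ c _ h q => exact ⟨(x, c), by simp [hs, h]⟩
  set ε := s.inf' hsne (fun pr => w pr.1 pr.2) with hε
  have hεpos : 0 < ε := by
    rw [hε, Finset.lt_inf'_iff]
    intro b hb
    rw [hs, Finset.mem_filter] at hb
    exact hpos _ _ hb.2
  have : ε ≤ G.wdist w x y := by
    have hne' : {r : ℝ | ∃ p : G.Walk x y, p.wlength w = r}.Nonempty :=
      ⟨p0.wlength w, p0, rfl⟩
    unfold SimpleGraph.wdist
    apply le_csInf hne'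
    rintro r ⟨p, rfl⟩
    cases p with
    | nil => exact absurd rfl hne
    | @cons _ c _ h q =>
      rw [Walk.wlength_cons]
      have h1 : ε ≤ w x c := by
        have := Finset.inf'_le (fun pr : V × V => w pr.1 pr.2)
          (show ((x, c) : V × V) ∈ s by simp [hs, h])
        exact this
      have h2 : 0 ≤ q.wlength w := Walk.wlength_nonneg hpos q
      linarith
  linarith

lemma IsTree.wdist_eq_of_isPath {T : SimpleGraph V} [Fintype V] (hT : T.IsTree)
    (hpos : ∀ a b : V, T.Adj a b → 0 < w a b) {x y : V} {p : T.Walk x y}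
    (hp : p.IsPath) : p.wlength w = T.wdist w x y := by
  apply le_antisymm
  · have hne' : {r : ℝ | ∃ q : T.Walk x y, q.wlength w = r}.Nonempty :=
      ⟨p.wlength w, p, rfl⟩
    unfold SimpleGraph.wdist
    apply le_csInf hne'
    rintro r ⟨q, rfl⟩
    obtain ⟨q', hq', _, hle⟩ := exists_path_le hpos q
    have : q' = p := (hT.existsUnique_path x y).unique hq' hp
    rw [this] at hle
    exact hle
  · exact wdist_le hpos p

lemma Walk.exists_first_mem {x u : V} (S : G.Walk x u) (Pset : Set V) :
    u ∈ Pset → ∃ y, y ∈ Pset ∧ ∃ (S1 : G.Walk x y) (S2 : G.Walk y u), S = S1.append S2 ∧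
      ∀ z ∈ S1.support, z ∈ Pset → z = y := by
  classical
  induction S with
  | nil =>
    intro hu
    exact ⟨_, hu, Walk.nil, Walk.nil, rfl, by intro z hz _; simpa using hz⟩
  | @cons x c u h p ih =>
    intro hu
    by_cases hx : x ∈ Pset
    · refine ⟨x, hx, Walk.nil, Walk.cons h p, rfl, ?_⟩
      intro z hz _; simpa using hz
    · obtain ⟨y, hy, S1, S2, hS, hfirst⟩ := ih hu
      refine ⟨y, hy, Walk.cons h S1, S2, by rw [Walk.cons_append, ← hS], ?_⟩
      intro z hz hzP
      rw [Walk.support_cons] at hz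
      rcases List.mem_cons.1 hz with rfl | hz
      · exact absurd hzP hx
      · exact hfirst z hz hzP

lemma wdist_split3 (hG : G.Connected) [Fintype V]
    (hpos : ∀ a b : V, G.Adj a b → 0 < w a b) {u v a b : V}
    (p1 : G.Walk u a) (p2 : G.Walk a b) (p3 : G.Walk b v)
    (hsum : p1.wlength w + p2.wlength w + p3.wlength w = G.wdist w u v) :
    G.wdist w u a + G.wdist w a b + G.wdist w b v = G.wdist w u v := by
  have h1 := wdist_le hpos p1
  have h2 := wdist_le hpos p2
  have h3 := wdist_le hpos p3
  have ht1 := wdist_triangle hG hpos u a v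
  have ht2 := wdist_triangle hG hpos a b v
  linarith

lemma split_order {u v : V} (P : G.Walk u v) {a b : V}
    (ha : a ∈ P.support) (hb : b ∈ P.support) :
    (∃ (p1 : G.Walk u a) (p2 : G.Walk a b) (p3 : G.Walk b v),
      p1.wlength w + p2.wlength w + p3.wlength w = P.wlength w) ∨
    (∃ (p1 : G.Walk u b) (p2 : G.Walk b a) (p3 : G.Walk a v),
      p1.wlength w + p2.wlength w + p3.wlength w = P.wlength w) := by
  classical
  have hspec := P.take_spec ha
  by_cases hb' : b ∈ (P.dropUntil a ha).support
  · left
    set q := P.dropUntil a ha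
    refine ⟨P.takeUntil a ha, q.takeUntil b hb', q.dropUntil b hb', ?_⟩
    have h2 := congrArg (Walk.wlength w) (q.take_spec hb')
    rw [Walk.wlength_append] at h2
    have h1 := congrArg (Walk.wlength w) hspec
    rw [Walk.wlength_append] at h1
    linarith
  · right
    have hb'' : b ∈ (P.takeUntil a ha).support := by
      rw [← hspec] at hb
      rcases (Walk.mem_support_append_iff _ _).1 hb with h | h
      · exact h
      · exact absurd h hb'
    set q := P.takeUntil a ha
    refine ⟨q.takeUntil b hb'', q.dropUntil b hb'', P.dropUntil a ha, ?_⟩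
    have h2 := congrArg (Walk.wlength w) (q.take_spec hb'')
    rw [Walk.wlength_append] at h2
    have h1 := congrArg (Walk.wlength w) hspec
    rw [Walk.wlength_append] at h1
    linarith

end SimpleGraph

open SimpleGraph in
lemma key_nearest {V : Type*} [Fintype V] (G : SimpleGraph V)
    (hG : G.Connected) (w : V → V → ℝ) (hsymm : ∀ a b : V, w a b = w b a)
    (hpos : ∀ a b : V, G.Adj a b → 0 < w a b) (u v : V)
    (T : SimpleGraph V) (hTG : T ≤ G) (hT : T.IsTree)
    (hdpu : ∀ x : V, T.wdist w u x = G.wdist w u x)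
    (hdpv : ∀ x : V, T.wdist w v x = G.wdist w v x)
    (P : G.Walk u v)
    (hPuniq : ∀ Q : G.Walk u v, Q.IsPath → Q.wlength w = G.wdist w u v → Q = P)
    (x a b : V) (ha : a ∈ P.support) (hb : b ∈ P.support)
    (hda : G.wdist w x a = G.wdistS w x {z | z ∈ P.support})
    (hdb : G.wdist w x b = G.wdistS w x {z | z ∈ P.support})
    (hE : G.wdist w u a + G.wdist w a b + G.wdist w b v = G.wdist w u v) : a = b := by
  classical
  set d := G.wdistS w x {z | z ∈ P.support} with hd
  have hTpos : ∀ a b : V, T.Adj a b → 0 < w a b := fun a b h => hpos a b (hTG h)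
  have hTconn : T.Connected := hT.isConnected
  -- the tree path from u to v maps to P
  obtain ⟨Q, hQp, hQl⟩ := exists_shortest hTconn hTpos u v
  have hQG : Q.mapLe hTG = P := by
    apply hPuniq
    · exact hQp.mapLe hTG
    · rw [Walk.wlength_mapLe, hQl, hdpu v]
  have hQsupp : Q.support = P.support := by
    rw [← hQG, Walk.support_mapLe]
  -- the tree path from x to u
  obtain ⟨S, hSp, hSl⟩ := exists_shortest hTconn hTpos x u
  obtain ⟨y, hy, S1, S2, hS, hfirst⟩ :=
    S.exists_first_mem {z | z ∈ P.support} P.start_mem_support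
  set t := S1.wlength w with hts
  -- d ≤ wdist x y ≤ t
  have himg_bdd : BddBelow (G.wdist w x '' {z | z ∈ P.support}) :=
    ⟨0, fun r ⟨z, _, hz⟩ => hz ▸ wdist_nonneg x z hpos⟩
  have hdy : d ≤ G.wdist w x y := csInf_le himg_bdd ⟨y, hy, rfl⟩
  have hxy_le_t : G.wdist w x y ≤ t := by
    have := wdist_le hpos (S1.mapLe hTG)
    rwa [Walk.wlength_mapLe] at this
  -- first inequality
  have hi : G.wdist w u x = t + S2.wlength w := by
    rw [← hdpu x, wdist_comm hsymm u x, hSl.symm, hS, Walk.wlength_append]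
  have hS2 : G.wdist w u y ≤ S2.wlength w := by
    rw [wdist_comm hsymm u y]
    have := wdist_le hpos (S2.mapLe hTG)
    rwa [Walk.wlength_mapLe] at this
  have hxa : G.wdist w u x ≤ G.wdist w u a + d := by
    have h1 := wdist_triangle hG hpos u a x
    have h2 : G.wdist w a x = d := by rw [wdist_comm hsymm a x, hda]
    linarith
  -- second inequality via the walk S1 ++ (Q from y to v)
  have hyQ : y ∈ Q.support := by rw [hQsupp]; exact hy
  set Qyv := Q.dropUntil y hyQ with hQyv
  have hQyvp : Qyv.IsPath := hQp.dropUntil hyQ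
  have hS1p : S1.IsPath := by
    have : (S1.append S2).IsPath := hS ▸ hSp
    exact this.of_append_left
  have hWpath : (S1.append Qyv).IsPath := by
    rw [Walk.isPath_def, Walk.support_append]
    have h1 : S1.support.Nodup := hS1p.support_nodup
    have h2 : Qyv.support.Nodup := hQyvp.support_nodup
    have hcons : Qyv.support = y :: Qyv.support.tail := Qyv.support_eq_cons
    have h3 : Qyv.support.tail.Nodup := by
      rw [hcons] at h2; exact (List.nodup_cons.1 h2).2
    have hynt : y ∉ Qyv.support.tail := by
      rw [hcons] at h2; exact (List.nodup_cons.1 h2).1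
    refine List.Nodup.append h1 h3 ?_
    intro z hz1 hz2
    have hzP : z ∈ P.support := by
      have : z ∈ Qyv.support := by rw [hcons]; exact List.mem_cons_of_mem _ hz2
      exact hQsupp ▸ (Walk.support_dropUntil_subset Q hyQ) this
    have : z = y := hfirst z hz1 hzP
    exact hynt (this ▸ hz2)
  have hWeq : (S1.append Qyv).wlength w = G.wdist w x v := by
    rw [hT.wdist_eq_of_isPath hTpos hWpath, ← wdist_comm hsymm v x, hdpv x,
      wdist_comm hsymm v x]
  have hWl : (S1.append Qyv).wlength w = t + Qyv.wlength w := Walk.wlength_append _ _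
  have hQyv_ge : G.wdist w y v ≤ Qyv.wlength w := by
    have := wdist_le hpos (Qyv.mapLe hTG)
    rwa [Walk.wlength_mapLe] at this
  have hxb : G.wdist w x v ≤ G.wdist w b v + d := by
    have h1 := wdist_triangle hG hpos x b v
    linarith [hdb.le, hdb.ge]
  have htri : G.wdist w u v ≤ G.wdist w u y + G.wdist w y v :=
    wdist_triangle hG hpos u y v
  by_contra hne
  have hab : 0 < G.wdist w a b := wdist_pos hG hsymm hpos hne
  linarith


/-- **Lemma 2.** If `u` and `v` have a common distance-preserving spanning tree `T` in `G`,
and `P` is the unique shortest `u`-`v` path in `G`, then every vertex `x` of `G` has a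
unique nearest vertex on `P`. -/
theorem unique_nearest_vertex_on_path {V : Type*} [Fintype V] (G : SimpleGraph V)
    (hG : G.Connected) (w : V → V → ℝ) (hsymm : ∀ a b : V, w a b = w b a)
    (hpos : ∀ a b : V, G.Adj a b → 0 < w a b) (u v : V)
    (T : SimpleGraph V) (hTG : T ≤ G) (hT : T.IsTree)
    (hdpu : ∀ x : V, T.wdist w u x = G.wdist w u x)
    (hdpv : ∀ x : V, T.wdist w v x = G.wdist w v x)
    (P : G.Walk u v) (hP : P.IsPath) (hPshort : P.wlength w = G.wdist w u v)
    (hPuniq : ∀ Q : G.Walk u v, Q.IsPath → Q.wlength w = G.wdist w u v → Q = P) :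
    ∀ x : V, ∃! y : V, y ∈ P.support ∧
      G.wdist w x y = G.wdistS w x {z | z ∈ P.support} := by
  intro x
  classical
  -- existence: the infimum over a finite nonempty set is attained
  have himg_fin : (G.wdist w x '' {z | z ∈ P.support}).Finite :=
    Set.Finite.image _ (Set.toFinite _)
  have himg_ne : (G.wdist w x '' {z | z ∈ P.support}).Nonempty :=
    ⟨G.wdist w x u, u, P.start_mem_support, rfl⟩
  have hmem : sInf (G.wdist w x '' {z | z ∈ P.support})
      ∈ G.wdist w x '' {z | z ∈ P.support} := himg_ne.csInf_mem himg_fin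
  obtain ⟨y0, hy0, hy0d⟩ := hmem
  -- the uniqueness core
  have key : ∀ a b : V, a ∈ P.support → b ∈ P.support →
      G.wdist w x a = G.wdistS w x {z | z ∈ P.support} →
      G.wdist w x b = G.wdistS w x {z | z ∈ P.support} → a = b := by
    intro a b ha hb hda hdb
    rcases SimpleGraph.split_order (w := w) P ha hb with ⟨p1, p2, p3, hsum⟩ | ⟨p1, p2, p3, hsum⟩
    · exact key_nearest G hG w hsymm hpos u v T hTG hT hdpu hdpv P hPuniq x a b ha hb hda hdb
        (SimpleGraph.wdist_split3 hG hpos p1 p2 p3 (by rw [hsum, hPshort]))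
    · exact (key_nearest G hG w hsymm hpos u v T hTG hT hdpu hdpv P hPuniq x b a hb ha hdb hda
        (SimpleGraph.wdist_split3 hG hpos p1 p2 p3 (by rw [hsum, hPshort]))).symm
  refine ⟨y0, ⟨hy0, hy0d⟩, ?_⟩
  rintro z ⟨hz, hzd⟩
  exact key z y0 hz hy0 hzd hy0d
end

section
/- Let G be a connected finite weighted graph with positive edge weights, and let u and v be two vertices of G that have a common distance-preserving spanning tree in G. Let P = (u = v_0, v_1, ..., v_k = v) be the unique shortest u-v path in G, and for 0 ≤ i ≤ k let V_i = {x ∈ V(G) : d_G(x, v_i) = d_G(x, V(P))}. Then the sets V_0, V_1, ..., V_k are pairwise disjoint and their union is V(G); that is, they form a partition of the vertex set of G. -/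
open SimpleGraph

set_option linter.unusedSectionVars false

namespace WDistAux

variable {V : Type*} {G : SimpleGraph V} {w : V → V → ℝ}

@[simp] lemma wlength_nil {x : V} : (SimpleGraph.Walk.nil : G.Walk x x).wlength w = 0 := rfl

lemma wlength_cons {a b c : V} (h : G.Adj a b) (p : G.Walk b c) :
    (p.cons h).wlength w = w a b + p.wlength w := by
  simp [SimpleGraph.Walk.wlength, SimpleGraph.Walk.darts_cons]

lemma wlength_append {a b c : V} (p : G.Walk a b) (q : G.Walk b c) :
    (p.append q).wlength w = p.wlength w + q.wlength w := by
  simp [SimpleGraph.Walk.wlength, SimpleGraph.Walk.darts_append]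

lemma wlength_reverse (hsymm : ∀ a b : V, w a b = w b a) {a b : V} (p : G.Walk a b) :
    p.reverse.wlength w = p.wlength w := by
  induction p with
  | nil => simp
  | cons h p ih =>
    rw [SimpleGraph.Walk.reverse_cons, wlength_append, wlength_cons, ih, wlength_cons,
      wlength_nil, hsymm]
    ring

lemma wlength_transfer {H : SimpleGraph V} {a b : V} (p : G.Walk a b)
    (hp : ∀ e ∈ p.edges, e ∈ H.edgeSet) :
    (p.transfer H hp).wlength w = p.wlength w := by
  induction p with
  | nil => rfl
  | cons h p ih => exact (wlength_cons (G := H) _ _).trans (by rw [ih, wlength_cons])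

lemma getVert_mem_support {x y : V} (p : G.Walk x y) {i : ℕ} (h : i ≤ p.length) :
    p.getVert i ∈ p.support :=
  SimpleGraph.Walk.mem_support_iff_exists_getVert.mpr ⟨i, rfl, h⟩

lemma getVert_inj {x y : V} {p : G.Walk x y} (hp : p.IsPath) :
    ∀ {i j : ℕ}, i ≤ p.length → j ≤ p.length → p.getVert i = p.getVert j → i = j := by
  induction p with
  | nil => intro i j hi hj _; simp at hi hj; omega
  | cons ha q ih =>
    intro i j hi hj h
    rw [SimpleGraph.Walk.cons_isPath_iff] at hp
    match i, j with
    | 0, 0 => rfl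
    | 0, j + 1 =>
      exfalso
      rw [SimpleGraph.Walk.getVert_zero, SimpleGraph.Walk.getVert_cons_succ] at h
      exact hp.2 (h ▸ getVert_mem_support q (by simpa using hj))
    | i + 1, 0 =>
      exfalso
      rw [SimpleGraph.Walk.getVert_zero, SimpleGraph.Walk.getVert_cons_succ] at h
      exact hp.2 (h ▸ getVert_mem_support q (by simpa using hi))
    | i + 1, j + 1 =>
      rw [SimpleGraph.Walk.getVert_cons_succ, SimpleGraph.Walk.getVert_cons_succ] at h
      have := ih hp.1 (by simpa using hi) (by simpa using hj) h
      omega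

variable (hpos : ∀ a b : V, G.Adj a b → 0 < w a b)
include hpos

lemma wlength_nonneg {a b : V} (p : G.Walk a b) : 0 ≤ p.wlength w := by
  induction p with
  | nil => simp
  | cons h p ih => rw [wlength_cons]; exact add_nonneg (hpos _ _ h).le ih

lemma wdist_bddBelow (x y : V) : BddBelow {r : ℝ | ∃ p : G.Walk x y, p.wlength w = r} := by
  exact ⟨0, by rintro r ⟨p, rfl⟩; exact wlength_nonneg hpos p⟩

lemma wdist_le {x y : V} (p : G.Walk x y) : G.wdist w x y ≤ p.wlength w :=
  csInf_le (wdist_bddBelow hpos x y) ⟨p, rfl⟩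

lemma wdist_nonneg (x y : V) : 0 ≤ G.wdist w x y := by
  rcases Set.eq_empty_or_nonempty {r : ℝ | ∃ p : G.Walk x y, p.wlength w = r} with h | h
  · simp [SimpleGraph.wdist, h, Real.sInf_empty]
  · exact le_csInf h (by rintro r ⟨p, rfl⟩; exact wlength_nonneg hpos p)

lemma wlength_takeUntil_add [DecidableEq V] {x y m : V} (p : G.Walk x y) (hm : m ∈ p.support) :
    (p.takeUntil m hm).wlength w + (p.dropUntil m hm).wlength w = p.wlength w := by
  rw [← wlength_append, p.take_spec hm]

lemma wlength_bypass_le [DecidableEq V] {x y : V} (p : G.Walk x y) :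
    p.bypass.wlength w ≤ p.wlength w := by
  induction p with
  | nil => simp [SimpleGraph.Walk.bypass]
  | cons h p ih =>
    simp only [SimpleGraph.Walk.bypass]
    split_ifs with hs
    · have h1 := wlength_takeUntil_add hpos p.bypass hs
      have h2 := wlength_nonneg hpos (p.bypass.takeUntil _ hs)
      have h3 := (hpos _ _ h).le
      rw [wlength_cons]
      linarith
    · rw [wlength_cons, wlength_cons]
      linarith

lemma exists_shortest_path [Fintype V] {x y : V} (hr : G.Reachable x y) :
    ∃ p : G.Walk x y, p.IsPath ∧ p.wlength w = G.wdist w x y := by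
  classical
  haveI : G.LocallyFinite := fun v => (Set.toFinite _).fintype
  have hfin : {p : G.Walk x y | p.IsPath}.Finite := by
    have hsub : {p : G.Walk x y | p.IsPath} ⊆
        {p : G.Walk x y | p.IsPath ∧ p.length < Fintype.card V} :=
      fun p hp => ⟨hp, hp.length_lt⟩
    exact Set.Finite.subset (Set.toFinite _) hsub
  have hne : {p : G.Walk x y | p.IsPath}.Nonempty := by
    obtain ⟨p⟩ := hr
    exact ⟨p.bypass, p.bypass_isPath⟩
  set L := (fun p : G.Walk x y => p.wlength w) '' {p : G.Walk x y | p.IsPath} with hL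
  have hmem : sInf L ∈ L :=
    (hne.image (fun p : G.Walk x y => p.wlength w)).csInf_mem
      (hfin.image (fun p : G.Walk x y => p.wlength w))
  obtain ⟨p, hp, hpm⟩ := hmem
  simp only [] at hpm
  refine ⟨p, hp, le_antisymm ?_ (wdist_le hpos p)⟩
  rw [show Walk.wlength w p = sInf L from hpm]
  have hdef : G.wdist w x y = sInf {r : ℝ | ∃ p : G.Walk x y, p.wlength w = r} := rfl
  rw [hdef]
  refine le_csInf ⟨_, ⟨p, rfl⟩⟩ ?_
  rintro r ⟨q, rfl⟩
  calc sInf L ≤ q.bypass.wlength w := csInf_le ((hfin.image _).bddBelow)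
        ⟨q.bypass, q.bypass_isPath, rfl⟩
    _ ≤ q.wlength w := wlength_bypass_le hpos q

lemma wdist_triangle [Fintype V] (hG : G.Connected) (x y z : V) :
    G.wdist w x z ≤ G.wdist w x y + G.wdist w y z := by
  obtain ⟨p, -, hp⟩ := exists_shortest_path hpos (hG x y)
  obtain ⟨q, -, hq⟩ := exists_shortest_path hpos (hG y z)
  calc G.wdist w x z ≤ (p.append q).wlength w := wdist_le hpos _
    _ = _ := by rw [wlength_append, hp, hq]

lemma wdist_symm [Fintype V] (hsymm : ∀ a b : V, w a b = w b a) (hG : G.Connected) (x y : V) :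
    G.wdist w x y = G.wdist w y x := by
  have key : ∀ a b : V, G.wdist w a b ≤ G.wdist w b a := by
    intro a b
    obtain ⟨p, -, hp⟩ := exists_shortest_path hpos (hG b a)
    calc G.wdist w a b ≤ p.reverse.wlength w := wdist_le hpos _
      _ = _ := by rw [wlength_reverse hsymm, hp]
  exact le_antisymm (key x y) (key y x)

lemma wdist_pos [Fintype V] (hG : G.Connected) {x y : V} (hxy : x ≠ y) :
    0 < G.wdist w x y := by
  classical
  set s : Finset (V × V) := Finset.univ.filter (fun pr : V × V => G.Adj pr.1 pr.2) with hs
  have hsne : s.Nonempty := by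
    obtain ⟨p⟩ := hG x y
    rcases p with _ | ⟨h, q⟩
    · exact absurd rfl hxy
    · exact ⟨(x, _), Finset.mem_filter.mpr ⟨Finset.mem_univ _, h⟩⟩
  set ε := s.inf' hsne (fun pr => w pr.1 pr.2) with hε
  have hεpos : 0 < ε := by
    rw [hε, Finset.lt_inf'_iff]
    rintro ⟨a, b⟩ hab
    simp only [hs, Finset.mem_filter] at hab
    exact hpos a b hab.2
  refine lt_of_lt_of_le hεpos (le_csInf ?_ ?_)
  · obtain ⟨p⟩ := hG x y
    exact ⟨_, p, rfl⟩
  · rintro r ⟨p, rfl⟩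
    rcases p with _ | ⟨h, q⟩
    · exact absurd rfl hxy
    · rename_i b
      rw [wlength_cons]
      have hmem : (x, b) ∈ s := Finset.mem_filter.mpr ⟨Finset.mem_univ _, h⟩
      have h1 : ε ≤ w x b := Finset.inf'_le _ hmem
      have h2 := wlength_nonneg hpos q
      linarith

lemma wdist_split [Fintype V] [DecidableEq V] (hG : G.Connected) {x y m : V}
    (p : G.Walk x y) (hp : p.wlength w = G.wdist w x y) (hm : m ∈ p.support) :
    (p.takeUntil m hm).wlength w = G.wdist w x m ∧
      (p.dropUntil m hm).wlength w = G.wdist w m y ∧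
      G.wdist w x y = G.wdist w x m + G.wdist w m y := by
  have h1 : G.wdist w x m ≤ (p.takeUntil m hm).wlength w := wdist_le hpos _
  have h2 : G.wdist w m y ≤ (p.dropUntil m hm).wlength w := wdist_le hpos _
  have h3 := wlength_takeUntil_add hpos p hm
  have h4 := wdist_triangle hpos hG x m y
  refine ⟨by linarith, by linarith, by linarith⟩

lemma wdist_mono [Fintype V] {T : SimpleGraph V} (hTG : T ≤ G)
    (hT : T.Connected) (x y : V) : G.wdist w x y ≤ T.wdist w x y := by
  refine le_csInf ?_ ?_
  · obtain ⟨p⟩ := hT x y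
    exact ⟨_, p, rfl⟩
  · rintro r ⟨p, rfl⟩
    have hedges : ∀ e ∈ p.edges, e ∈ G.edgeSet := fun e he =>
      SimpleGraph.edgeSet_mono hTG (p.edges_subset_edgeSet he)
    calc G.wdist w x y ≤ (p.transfer G hedges).wlength w := wdist_le hpos _
      _ = p.wlength w := wlength_transfer p hedges

end WDistAux

namespace Final

open WDistAux SimpleGraph.Walk

variable {V : Type*} [Fintype V] {G T : SimpleGraph V} {w : V → V → ℝ}

lemma median (hG : G.Connected) (hsymm : ∀ a b : V, w a b = w b a)
    (hpos : ∀ a b : V, G.Adj a b → 0 < w a b) {u v : V}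
    (hTG : T ≤ G) (hT : T.IsTree)
    (hdpu : ∀ x : V, T.wdist w u x = G.wdist w u x)
    (hdpv : ∀ x : V, T.wdist w v x = G.wdist w v x)
    {P : G.Walk u v} (hP : P.IsPath) (hPshort : P.wlength w = G.wdist w u v)
    (hPuniq : ∀ Q : G.Walk u v, Q.IsPath → Q.wlength w = G.wdist w u v → Q = P) (x : V) :
    ∃ m ∈ P.support, ∃ c : ℝ, G.wdist w m x ≤ c ∧
      G.wdist w u x = G.wdist w u m + c ∧ G.wdist w v x = G.wdist w v m + c := by
  classical
  have hTc : T.Connected := hT.isConnected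
  have hTpos : ∀ a b : V, T.Adj a b → 0 < w a b := fun a b h => hpos a b (hTG h)
  obtain ⟨p, hpP, hpL⟩ := exists_shortest_path hTpos (hTc u x)
  obtain ⟨q, hqP, hqL⟩ := exists_shortest_path hTpos (hTc v x)
  set K : Set V := {y | y ∈ p.support ∧ y ∈ q.support} with hK
  have hKne : K.Nonempty := ⟨x, p.end_mem_support, q.end_mem_support⟩
  obtain ⟨m, hmK, hmmin⟩ :=
    Set.exists_min_image K (fun y => T.wdist w u y) (Set.toFinite K) hKne
  have hm1 : m ∈ p.support := hmK.1
  have hm2 : m ∈ q.support := hmK.2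
  obtain ⟨hA, hA', hsplitp⟩ := wdist_split hTpos hTc p hpL hm1
  obtain ⟨hB, hB', hsplitq⟩ := wdist_split hTpos hTc q hqL hm2
  set A := p.takeUntil m hm1 with hAdef
  set C := (q.takeUntil m hm2).reverse with hCdef
  have hAP : A.IsPath := hpP.takeUntil hm1
  have hCP : C.IsPath := (hqP.takeUntil hm2).reverse
  have hCsup : C.support = m :: C.support.tail := C.support_eq_cons
  have hCnd := hCP.support_nodup
  rw [hCsup, List.nodup_cons] at hCnd
  -- the concatenated walk u → m → v in T
  have hc0 : (A.append C).IsPath := by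
    rw [Walk.isPath_def, Walk.support_append, List.nodup_append]
    refine ⟨hAP.support_nodup, hCnd.2, ?_⟩
    intro y hyA y' hyC hyy'
    subst hyy'
    have hyq : y ∈ q.support := by
      have : y ∈ C.support := List.mem_of_mem_tail hyC
      rw [hCdef, Walk.support_reverse, List.mem_reverse] at this
      exact q.support_takeUntil_subset hm2 this
    have hyp : y ∈ p.support := p.support_takeUntil_subset hm1 hyA
    have hyK : y ∈ K := ⟨hyp, hyq⟩
    obtain ⟨_, _, hsp⟩ := wdist_split hTpos hTc A hA hyA
    by_cases hym : y = m
    · exact hCnd.1 (hym ▸ hyC)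
    · have h1 : 0 < T.wdist w y m := wdist_pos hTpos hTc hym
      have h2 : T.wdist w u m ≤ T.wdist w u y := hmmin y hyK
      linarith
  obtain ⟨s, hsP, hsL⟩ := exists_shortest_path hTpos (hTc u v)
  have hc0s : A.append C = s := (hT.existsUnique_path u v).unique hc0 hsP
  have hc0len : (A.append C).wlength w = G.wdist w u v := by
    rw [hc0s, hsL, hdpu v]
  have hedges : ∀ e ∈ (A.append C).edges, e ∈ G.edgeSet := fun e he =>
    SimpleGraph.edgeSet_mono hTG ((A.append C).edges_subset_edgeSet he)
  have hcG : ((A.append C).transfer G hedges) = P :=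
    hPuniq _ (hc0.transfer hedges) (by rw [wlength_transfer, hc0len])
  have hmP : m ∈ P.support := by
    rw [← hcG, Walk.support_transfer]
    exact (A.mem_support_append_iff C).mpr (Or.inl A.end_mem_support)
  refine ⟨m, hmP, T.wdist w m x, wdist_mono hpos hTG hTc m x, ?_, ?_⟩
  · rw [← hdpu x, ← hdpu m, hsplitp]
  · rw [← hdpv x, ← hdpv m, hsplitq]

lemma key_index [DecidableEq V] (hG : G.Connected) (hsymm : ∀ a b : V, w a b = w b a)
    (hpos : ∀ a b : V, G.Adj a b → 0 < w a b) {u v : V}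
    {P : G.Walk u v} (hP : P.IsPath) (hPshort : P.wlength w = G.wdist w u v)
    {m : V} (hm : m ∈ P.support) {x : V} {c : ℝ}
    (hc : G.wdist w m x ≤ c)
    (hu : G.wdist w u x = G.wdist w u m + c)
    (hv : G.wdist w v x = G.wdist w v m + c)
    {i : ℕ} (hi : i ≤ P.length) (hx : x ∈ Vset G w P i) :
    i = (P.takeUntil m hm).length := by
  classical
  obtain ⟨hA, hB, hsplit⟩ := wdist_split hpos hG P hPshort hm
  set A := P.takeUntil m hm with hAdef
  set B := P.dropUntil m hm with hBdef
  set t := A.length with ht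
  have hlen : A.length + B.length = P.length := by
    rw [← Walk.length_append, P.take_spec hm]
  have hgetP : ∀ n, P.getVert n = (A.append B).getVert n := by
    intro n; rw [P.take_spec hm]
  have hgt : P.getVert t = m := by
    rw [hgetP, Walk.getVert_append]
    simp [t]
  simp only [Vset, Set.mem_setOf_eq] at hx
  have hdefS : G.wdistS w x {z | z ∈ P.support} =
      sInf (G.wdist w x '' {z | z ∈ P.support}) := rfl
  have hbdd : BddBelow (G.wdist w x '' {z | z ∈ P.support}) :=
    ⟨0, by rintro r ⟨z, hz, rfl⟩; exact wdist_nonneg hpos x z⟩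
  have hDle : G.wdist w x (P.getVert i) ≤ G.wdist w x m := by
    rw [hx, hdefS]
    exact csInf_le hbdd ⟨m, hm, rfl⟩
  have t2 : G.wdist w x (P.getVert i) = G.wdist w (P.getVert i) x :=
    wdist_symm hpos hsymm hG _ _
  have t3 : G.wdist w x m = G.wdist w m x := wdist_symm hpos hsymm hG _ _
  have hym : P.getVert i = m := by
    rcases le_or_gt i t with hit | hit
    · have hyA : P.getVert i ∈ A.support := by
        rcases lt_or_eq_of_le hit with h' | h'
        · have hgv : P.getVert i = A.getVert i := by
            rw [hgetP, Walk.getVert_append]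
            simp [show i < A.length by omega]
          rw [hgv]
          exact getVert_mem_support A h'.le
        · have hgv : P.getVert i = m := by rw [h']; exact hgt
          rw [hgv]
          exact A.end_mem_support
      obtain ⟨_, _, hsp⟩ := wdist_split hpos hG A hA hyA
      have t1 : G.wdist w u x ≤ G.wdist w u (P.getVert i) + G.wdist w (P.getVert i) x :=
        wdist_triangle hpos hG _ _ _
      by_contra hne
      have hposd : 0 < G.wdist w (P.getVert i) m := wdist_pos hpos hG hne
      linarith
    · have hyB : P.getVert i ∈ B.support := by
        have hgv : P.getVert i = B.getVert (i - t) := by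
          rw [hgetP, Walk.getVert_append]
          simp [t, show ¬ i < A.length by omega]
        rw [hgv]
        exact getVert_mem_support B (by omega)
      obtain ⟨_, _, hsp⟩ := wdist_split hpos hG B hB hyB
      have t1 : G.wdist w v x ≤ G.wdist w v (P.getVert i) + G.wdist w (P.getVert i) x :=
        wdist_triangle hpos hG _ _ _
      have t4 : G.wdist w v (P.getVert i) = G.wdist w (P.getVert i) v :=
        wdist_symm hpos hsymm hG _ _
      have t5 : G.wdist w v m = G.wdist w m v := wdist_symm hpos hsymm hG _ _
      by_contra hne
      have hposd : 0 < G.wdist w m (P.getVert i) :=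
        wdist_pos hpos hG (fun h => hne h.symm)
      linarith
  have hteq : P.getVert i = P.getVert t := by rw [hym, hgt]
  exact getVert_inj hP hi (by omega) hteq

end Final

/-- The sets `V_0, V_1, ..., V_k` are pairwise disjoint and their union is `V(G)`,
i.e. they form a partition of the vertex set of `G`. -/
theorem Vsets_partition {V : Type*} [Fintype V] (G : SimpleGraph V)
    (hG : G.Connected) (w : V → V → ℝ) (hsymm : ∀ a b : V, w a b = w b a)
    (hpos : ∀ a b : V, G.Adj a b → 0 < w a b) (u v : V)
    (T : SimpleGraph V) (hTG : T ≤ G) (hT : T.IsTree)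
    (hdpu : ∀ x : V, T.wdist w u x = G.wdist w u x)
    (hdpv : ∀ x : V, T.wdist w v x = G.wdist w v x)
    (P : G.Walk u v) (hP : P.IsPath) (hPshort : P.wlength w = G.wdist w u v)
    (hPuniq : ∀ Q : G.Walk u v, Q.IsPath → Q.wlength w = G.wdist w u v → Q = P) :
    (∀ i j : ℕ, i ≤ P.length → j ≤ P.length → i ≠ j →
        Vset G w P i ∩ Vset G w P j = ∅) ∧
      (⋃ i ∈ Set.Iic P.length, Vset G w P i) = Set.univ := by
  classical
  constructor
  · intro i j hi hj hij
    ext x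
    simp only [Set.mem_inter_iff, Set.mem_empty_iff_false, iff_false, not_and]
    intro hxi hxj
    obtain ⟨m, hm, c, hc, hu', hv'⟩ :=
      Final.median hG hsymm hpos hTG hT hdpu hdpv hP hPshort hPuniq x
    have h1 := Final.key_index hG hsymm hpos hP hPshort hm hc hu' hv' hi hxi
    have h2 := Final.key_index hG hsymm hpos hP hPshort hm hc hu' hv' hj hxj
    exact hij (h1.trans h2.symm)
  · ext x
    simp only [Set.mem_iUnion, Set.mem_univ, iff_true, Set.mem_Iic]
    have hS : (G.wdist w x '' {z | z ∈ P.support}).Nonempty :=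
      ⟨_, u, P.start_mem_support, rfl⟩
    obtain ⟨z, hz, hzq⟩ := hS.csInf_mem (Set.toFinite _)
    obtain ⟨n, hn1, hn2⟩ := SimpleGraph.Walk.mem_support_iff_exists_getVert.mp hz
    refine ⟨n, hn2, ?_⟩
    show G.wdist w x (P.getVert n) = G.wdistS w x {z | z ∈ P.support}
    rw [hn1,
      show G.wdistS w x {z | z ∈ P.support} =
        sInf (G.wdist w x '' {z | z ∈ P.support}) from rfl]
    exact hzq
end

section
/- Let G be a connected finite weighted graph with positive edge weights, and let u and v be two vertices of G that have a common distance-preserving spanning tree in G. Let P = (u = v_0, v_1, ..., v_k = v) be the unique shortest u-v path in G, and for 0 ≤ i ≤ k let V_i = {x ∈ V(G) : d_G(x, v_i) = d_G(x, V(P))}. If e = xy is an edge of G with x ∈ V_i and y ∈ V_j, then w(e) ≥ d_G(v_i, v_j) and |d_G(v_i, x) − d_G(v_j, y)| ≤ w(e) − d_G(v_i, v_j). -/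
open SimpleGraph

namespace DPaux

variable {V : Type*} {G : SimpleGraph V} {w : V → V → ℝ}

lemma wlength_nil {x : V} : (SimpleGraph.Walk.nil : G.Walk x x).wlength w = 0 := rfl

lemma wlength_cons {x y z : V} (h : G.Adj x y) (p : G.Walk y z) :
    (SimpleGraph.Walk.cons h p).wlength w = w x y + p.wlength w := by
  simp [SimpleGraph.Walk.wlength, SimpleGraph.Walk.darts_cons]

lemma wlength_append {x y z : V} (p : G.Walk x y) (q : G.Walk y z) :
    (p.append q).wlength w = p.wlength w + q.wlength w := by
  simp [SimpleGraph.Walk.wlength, SimpleGraph.Walk.darts_append]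

lemma wlength_reverse (hsymm : ∀ a b : V, w a b = w b a) {x y : V} (p : G.Walk x y) :
    p.reverse.wlength w = p.wlength w := by
  unfold SimpleGraph.Walk.wlength
  rw [SimpleGraph.Walk.darts_reverse, List.map_reverse, List.sum_reverse, List.map_map]
  congr 1
  refine List.map_congr_left fun d _ => ?_
  simp [SimpleGraph.Dart.symm, hsymm d.toProd.1 d.toProd.2]

lemma wlength_nonneg (hpos : ∀ a b : V, G.Adj a b → 0 < w a b) {x y : V} (p : G.Walk x y) :
    0 ≤ p.wlength w := by
  induction p with
  | nil => simp [wlength_nil]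
  | cons h p ih => rw [wlength_cons]; have := hpos _ _ h; linarith

lemma wlength_mapLe {T : SimpleGraph V} (hTG : T ≤ G) {x y : V} (p : T.Walk x y) :
    (p.mapLe hTG).wlength w = p.wlength w := by
  induction p with
  | nil => rfl
  | cons h p ih =>
    simp only [SimpleGraph.Walk.mapLe, SimpleGraph.Walk.map_cons] at *
    rw [wlength_cons, wlength_cons, ← ih]
    rfl

section wdist

variable (hG : G.Connected) (hpos : ∀ a b : V, G.Adj a b → 0 < w a b)
include hG hpos
set_option linter.unusedSectionVars false

lemma wdist_bddBelow (x y : V) : BddBelow {r : ℝ | ∃ p : G.Walk x y, p.wlength w = r} := by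
  exact ⟨0, by rintro r ⟨p, rfl⟩; exact wlength_nonneg hpos p⟩

lemma wdist_le_wlength {x y : V} (p : G.Walk x y) : G.wdist w x y ≤ p.wlength w :=
  csInf_le (wdist_bddBelow hG hpos x y) ⟨p, rfl⟩

lemma wdist_set_nonempty (x y : V) :
    Set.Nonempty {r : ℝ | ∃ p : G.Walk x y, p.wlength w = r} := by
  obtain ⟨p⟩ := hG.preconnected x y
  exact ⟨_, p, rfl⟩

lemma wdist_nonneg (x y : V) : 0 ≤ G.wdist w x y := by
  apply le_csInf (wdist_set_nonempty hG hpos x y)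
  rintro r ⟨p, rfl⟩
  exact wlength_nonneg hpos p

lemma wdist_self (x : V) : G.wdist w x x = 0 := by
  refine le_antisymm ?_ (wdist_nonneg hG hpos x x)
  simpa [wlength_nil] using wdist_le_wlength hG hpos (SimpleGraph.Walk.nil : G.Walk x x)

lemma wdist_triangle (x y z : V) :
    G.wdist w x z ≤ G.wdist w x y + G.wdist w y z := by
  have h1 : ∀ q : G.Walk y z, G.wdist w x z ≤ G.wdist w x y + q.wlength w := by
    intro q
    have h2 : G.wdist w x z - q.wlength w ≤ G.wdist w x y := by
      apply le_csInf (wdist_set_nonempty hG hpos x y)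
      rintro r ⟨p, rfl⟩
      have := wdist_le_wlength hG hpos (p.append q)
      rw [wlength_append] at this
      linarith
    linarith
  have h2 : G.wdist w x z - G.wdist w x y ≤ G.wdist w y z := by
    apply le_csInf (wdist_set_nonempty hG hpos y z)
    rintro r ⟨q, rfl⟩
    linarith [h1 q]
  linarith

lemma wdist_comm (hsymm : ∀ a b : V, w a b = w b a) (x y : V) :
    G.wdist w x y = G.wdist w y x := by
  have key : ∀ a b : V, G.wdist w a b ≤ G.wdist w b a := by
    intro a b
    apply le_csInf (wdist_set_nonempty hG hpos b a)
    rintro r ⟨q, rfl⟩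
    rw [← wlength_reverse hsymm q]
    exact wdist_le_wlength hG hpos q.reverse
  exact le_antisymm (key x y) (key y x)

lemma wdist_le_weight {x y : V} (h : G.Adj x y) : G.wdist w x y ≤ w x y := by
  have := wdist_le_wlength hG hpos (SimpleGraph.Walk.cons h SimpleGraph.Walk.nil)
  rwa [wlength_cons, wlength_nil, add_zero] at this

/-- splitting inequality at one point -/
lemma two_split {a b : V} (p : G.Walk a b) (i : ℕ) :
    G.wdist w a (p.getVert i) + G.wdist w (p.getVert i) b ≤ p.wlength w := by
  induction p generalizing i with
  | nil =>
    simp [SimpleGraph.Walk.getVert, wlength_nil, wdist_self hG hpos]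
  | @cons a c b h p ih =>
    cases i with
    | zero =>
      simp only [SimpleGraph.Walk.getVert]
      have h1 := wdist_self hG hpos a
      have h2 := wdist_le_wlength hG hpos (SimpleGraph.Walk.cons h p)
      linarith
    | succ n =>
      simp only [SimpleGraph.Walk.getVert, wlength_cons]
      have h1 := ih n
      have h2 := wdist_triangle hG hpos a c (p.getVert n)
      have h3 := wdist_le_weight hG hpos h
      linarith

/-- splitting inequality at two points -/
lemma three_split {a b : V} (p : G.Walk a b) (i j : ℕ) (hij : i ≤ j) :
    G.wdist w a (p.getVert i) + G.wdist w (p.getVert i) (p.getVert j) +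
      G.wdist w (p.getVert j) b ≤ p.wlength w := by
  induction p generalizing i j with
  | nil =>
    simp [SimpleGraph.Walk.getVert, wlength_nil, wdist_self hG hpos]
  | @cons a c b h p ih =>
    cases i with
    | zero =>
      cases j with
      | zero =>
        simp only [SimpleGraph.Walk.getVert]
        have h1 := wdist_self hG hpos a
        have h2 := wdist_le_wlength hG hpos (SimpleGraph.Walk.cons h p)
        linarith
      | succ m =>
        simp only [SimpleGraph.Walk.getVert, wlength_cons]
        have h1 := two_split hG hpos p m
        have h2 := wdist_triangle hG hpos a c (p.getVert m)
        have h3 := wdist_le_weight hG hpos h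
        have h4 := wdist_self hG hpos a
        linarith
    | succ n =>
      cases j with
      | zero => omega
      | succ m =>
        simp only [SimpleGraph.Walk.getVert, wlength_cons]
        have h1 := ih n m (by omega)
        have h2 := wdist_triangle hG hpos a c (p.getVert n)
        have h3 := wdist_le_weight hG hpos h
        linarith

end wdist


section tree

variable {T : SimpleGraph V}

lemma wdist_le_twalk (hG : G.Connected) (hpos : ∀ a b : V, G.Adj a b → 0 < w a b)
    (hTG : T ≤ G) {a b : V} (p : T.Walk a b) : G.wdist w a b ≤ p.wlength w := by
  rw [← wlength_mapLe hTG p]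
  exact wdist_le_wlength hG hpos _

lemma tree_path_wlength (hT : T.IsTree) (hposT : ∀ a b : V, T.Adj a b → 0 < w a b)
    {a b : V} (p : T.Walk a b) (hp : p.IsPath) : T.wdist w a b = p.wlength w := by
  classical
  refine le_antisymm (wdist_le_wlength hT.isConnected hposT p) ?_
  refine le_csInf ⟨_, p, rfl⟩ ?_
  rintro r ⟨q, rfl⟩
  have hqb : q.bypass = p :=
    (hT.existsUnique_path a b).unique q.bypass_isPath hp
  rw [← hqb]
  have hnd : q.bypass.darts.Nodup :=
    (q.bypass_isPath.isTrail.edges_nodup).of_map SimpleGraph.Dart.edge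
  obtain ⟨l, hperm, hsl⟩ := hnd.subperm q.darts_bypass_subset
  show (q.bypass.darts.map fun d => w d.toProd.1 d.toProd.2).sum ≤
    (q.darts.map fun d => w d.toProd.1 d.toProd.2).sum
  calc (q.bypass.darts.map fun d => w d.toProd.1 d.toProd.2).sum
      = (l.map fun d => w d.toProd.1 d.toProd.2).sum :=
        ((hperm.map _).sum_eq).symm
    _ ≤ (q.darts.map fun d => w d.toProd.1 d.toProd.2).sum := by
        refine List.Sublist.sum_le_sum (hsl.map _) ?_
        rintro x hx
        obtain ⟨d, _, rfl⟩ := List.mem_map.1 hx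
        exact (hposT _ _ d.adj).le

/-- Split a walk at the first vertex belonging to `S`, assuming the endpoint is in `S`. -/
lemma exists_first_mem (S : Set V) :
    ∀ {a b : V} (q : T.Walk a b), b ∈ S →
      ∃ m, m ∈ S ∧ ∃ (q1 : T.Walk a m) (q2 : T.Walk m b),
        q = q1.append q2 ∧ ∀ z ∈ q1.support, z ∈ S → z = m := by
  intro a b q
  induction q with
  | @nil a =>
    intro hb
    exact ⟨a, hb, SimpleGraph.Walk.nil, SimpleGraph.Walk.nil, rfl, by
      intro z hz _; simpa using hz⟩
  | @cons a c b h q ih =>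
    intro hb
    by_cases ha : a ∈ S
    · exact ⟨a, ha, SimpleGraph.Walk.nil, SimpleGraph.Walk.cons h q, rfl, by
        intro z hz _; simpa using hz⟩
    · obtain ⟨m, hm, q1, q2, heq, hcond⟩ := ih hb
      refine ⟨m, hm, SimpleGraph.Walk.cons h q1, q2, ?_, ?_⟩
      · rw [SimpleGraph.Walk.cons_append, heq]
      · intro z hz hzS
        simp only [SimpleGraph.Walk.support_cons, List.mem_cons] at hz
        rcases hz with rfl | hz
        · exact absurd hzS ha
        · exact hcond z hz hzS

end tree

section median

variable {T : SimpleGraph V}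

lemma isPath_append {a b c : V} {p : T.Walk a b} {q : T.Walk b c} (hp : p.IsPath)
    (hq : q.IsPath) (hint : ∀ z ∈ p.support, z ∈ q.support → z = b) :
    (p.append q).IsPath := by
  rw [SimpleGraph.Walk.isPath_def, SimpleGraph.Walk.support_append]
  have hq' : q.support = b :: q.support.tail := q.support_eq_cons
  have hqnd : q.support.Nodup := hq.support_nodup
  rw [hq'] at hqnd
  rcases List.nodup_cons.1 hqnd with ⟨hbt, htnd⟩
  refine List.Nodup.append hp.support_nodup htnd ?_
  intro z hz1 hz2
  have hz2' : z ∈ q.support := by rw [hq']; exact List.mem_cons_of_mem _ hz2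
  exact hbt ((hint z hz1 hz2') ▸ hz2)

lemma median (hG : G.Connected) (hsymm : ∀ a b : V, w a b = w b a)
    (hpos : ∀ a b : V, G.Adj a b → 0 < w a b)
    (hTG : T ≤ G) (hT : T.IsTree) {u v : V}
    (hdpu : ∀ x : V, T.wdist w u x = G.wdist w u x)
    (hdpv : ∀ x : V, T.wdist w v x = G.wdist w v x)
    (P : G.Walk u v) (hPuniq : ∀ Q : G.Walk u v, Q.IsPath → Q.wlength w = G.wdist w u v → Q = P)
    (x : V) :
    ∃ m ∈ P.support, G.wdist w u x = G.wdist w u m + G.wdist w m x ∧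
      G.wdist w v x = G.wdist w v m + G.wdist w m x := by
  classical
  have hposT : ∀ a b : V, T.Adj a b → 0 < w a b := fun a b h => hpos a b (hTG h)
  obtain ⟨p, hp, -⟩ := hT.existsUnique_path u x
  obtain ⟨m, hmS, q1, q2, hq, hcond⟩ :=
    exists_first_mem {z | z ∈ P.support} p.reverse P.start_mem_support
  have hlen : p.wlength w = q1.wlength w + q2.wlength w := by
    rw [← wlength_reverse hsymm p, hq, wlength_append]
  have hdux : G.wdist w u x = q2.wlength w + q1.wlength w := by
    rw [← hdpu x, tree_path_wlength hT hposT p hp, hlen]; ring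
  have h1 : G.wdist w u m ≤ q2.wlength w := by
    have := wdist_le_twalk hG hpos hTG q2.reverse
    rwa [wlength_reverse hsymm] at this
  have h2 : G.wdist w m x ≤ q1.wlength w := by
    have := wdist_le_twalk hG hpos hTG q1.reverse
    rwa [wlength_reverse hsymm] at this
  have htri := wdist_triangle hG hpos u m x
  have hux : G.wdist w u x = G.wdist w u m + G.wdist w m x := by linarith
  -- v side
  obtain ⟨R, hR, -⟩ := hT.existsUnique_path u v
  have hRP : R.mapLe hTG = P := hPuniq _ (hR.mapLe hTG) (by
    rw [wlength_mapLe hTG, ← tree_path_wlength hT hposT R hR, hdpu v])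
  have hRsupp : R.support = P.support := by
    rw [← hRP]
    rw [SimpleGraph.Walk.mapLe, SimpleGraph.Walk.support_map,
      show (⇑(SimpleGraph.Hom.ofLE hTG)) = id from rfl, List.map_id]
  have hmR : m ∈ R.reverse.support := by
    rw [SimpleGraph.Walk.support_reverse, List.mem_reverse, hRsupp]
    exact hmS
  have hR1path : (R.reverse.takeUntil m hmR).IsPath := hR.reverse.takeUntil hmR
  have hq1path : q1.IsPath := by
    have hrev : p.reverse.IsPath := hp.reverse
    rw [hq] at hrev
    exact hrev.of_append_left
  have hW : ((R.reverse.takeUntil m hmR).append q1.reverse).IsPath := by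
    refine isPath_append hR1path hq1path.reverse ?_
    intro z hz1 hz2
    have hzS : z ∈ P.support := by
      have := SimpleGraph.Walk.support_takeUntil_subset _ hmR hz1
      rwa [SimpleGraph.Walk.support_reverse, List.mem_reverse, hRsupp] at this
    have hzq1 : z ∈ q1.support := by
      rwa [SimpleGraph.Walk.support_reverse, List.mem_reverse] at hz2
    exact hcond z hzq1 hzS
  have hdvx : G.wdist w v x =
      (R.reverse.takeUntil m hmR).wlength w + q1.reverse.wlength w := by
    rw [← hdpv x, tree_path_wlength hT hposT _ hW, wlength_append]
  have h3 : G.wdist w v m ≤ (R.reverse.takeUntil m hmR).wlength w :=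
    wdist_le_twalk hG hpos hTG _
  have h4 : G.wdist w m x ≤ q1.reverse.wlength w := by
    rwa [wlength_reverse hsymm]
  have htri2 := wdist_triangle hG hpos v m x
  have hvx : G.wdist w v x = G.wdist w v m + G.wdist w m x := by linarith
  exact ⟨m, hmS, hux, hvx⟩

end median

section main

lemma proj (hG : G.Connected) (hsymm : ∀ a b : V, w a b = w b a)
    (hpos : ∀ a b : V, G.Adj a b → 0 < w a b)
    {T : SimpleGraph V} (hTG : T ≤ G) (hT : T.IsTree) {u v : V}
    (hdpu : ∀ x : V, T.wdist w u x = G.wdist w u x)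
    (hdpv : ∀ x : V, T.wdist w v x = G.wdist w v x)
    (P : G.Walk u v) (hPshort : P.wlength w = G.wdist w u v)
    (hPuniq : ∀ Q : G.Walk u v, Q.IsPath → Q.wlength w = G.wdist w u v → Q = P)
    (i : ℕ) (x : V) (hx : x ∈ Vset G w P i) :
    G.wdist w u x = G.wdist w u (P.getVert i) + G.wdist w (P.getVert i) x ∧
      G.wdist w v x = G.wdist w v (P.getVert i) + G.wdist w (P.getVert i) x := by
  obtain ⟨m, hm, hux, hvx⟩ := median hG hsymm hpos hTG hT hdpu hdpv P hPuniq x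
  have hxv : G.wdist w x (P.getVert i) = G.wdistS w x {z | z ∈ P.support} := hx
  have hle : G.wdistS w x {z | z ∈ P.support} ≤ G.wdist w x m := by
    refine csInf_le ⟨0, ?_⟩ ⟨m, hm, rfl⟩
    rintro r ⟨z, _, rfl⟩
    exact wdist_nonneg hG hpos x z
  have c3 : G.wdist w x (P.getVert i) = G.wdist w (P.getVert i) x :=
    wdist_comm hG hpos hsymm _ _
  have c4 : G.wdist w x m = G.wdist w m x := wdist_comm hG hpos hsymm _ _
  have hvix_le : G.wdist w (P.getVert i) x ≤ G.wdist w m x := by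
    rw [← c3, ← c4]
    calc G.wdist w x (P.getVert i) = _ := hxv
      _ ≤ _ := hle
  have hs1 := two_split hG hpos P i
  have hs2 := wdist_triangle hG hpos u (P.getVert i) v
  have hm_tri := wdist_triangle hG hpos u m v
  have cm1 : G.wdist w m v = G.wdist w v m := wdist_comm hG hpos hsymm _ _
  have c2 : G.wdist w (P.getVert i) v = G.wdist w v (P.getVert i) :=
    wdist_comm hG hpos hsymm _ _
  have tri1 := wdist_triangle hG hpos u (P.getVert i) x
  have tri2 := wdist_triangle hG hpos v (P.getVert i) x
  constructor <;> linarith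

lemma main_aux (hG : G.Connected) (hsymm : ∀ a b : V, w a b = w b a)
    (hpos : ∀ a b : V, G.Adj a b → 0 < w a b)
    {T : SimpleGraph V} (hTG : T ≤ G) (hT : T.IsTree) {u v : V}
    (hdpu : ∀ x : V, T.wdist w u x = G.wdist w u x)
    (hdpv : ∀ x : V, T.wdist w v x = G.wdist w v x)
    (P : G.Walk u v) (hPshort : P.wlength w = G.wdist w u v)
    (hPuniq : ∀ Q : G.Walk u v, Q.IsPath → Q.wlength w = G.wdist w u v → Q = P)
    (i j : ℕ) (hij : i ≤ j) (x y : V) (hxy : G.Adj x y)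
    (hx : x ∈ Vset G w P i) (hy : y ∈ Vset G w P j) :
    w x y ≥ G.wdist w (P.getVert i) (P.getVert j) ∧
      |G.wdist w (P.getVert i) x - G.wdist w (P.getVert j) y| ≤
        w x y - G.wdist w (P.getVert i) (P.getVert j) := by
  obtain ⟨hA1, hA2⟩ := proj hG hsymm hpos hTG hT hdpu hdpv P hPshort hPuniq i x hx
  obtain ⟨hB1, hB2⟩ := proj hG hsymm hpos hTG hT hdpu hdpv P hPshort hPuniq j y hy
  have s3 := three_split hG hpos P i j hij
  have t_j := two_split hG hpos P j
  have t_i := two_split hG hpos P i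
  have tri_uvj_v := wdist_triangle hG hpos u (P.getVert j) v
  have tri_uvi_vj := wdist_triangle hG hpos u (P.getVert i) (P.getVert j)
  have tri_uvi_v := wdist_triangle hG hpos u (P.getVert i) v
  have tri_vi_vj_v := wdist_triangle hG hpos (P.getVert i) (P.getVert j) v
  have c1 : G.wdist w v (P.getVert i) = G.wdist w (P.getVert i) v :=
    wdist_comm hG hpos hsymm _ _
  have c2 : G.wdist w v (P.getVert j) = G.wdist w (P.getVert j) v :=
    wdist_comm hG hpos hsymm _ _
  have E1 : G.wdist w u y ≤ G.wdist w u x + w x y := by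
    have := wdist_triangle hG hpos u x y
    have := wdist_le_weight hG hpos hxy
    linarith
  have E2 : G.wdist w v x ≤ G.wdist w v y + w x y := by
    have := wdist_triangle hG hpos v y x
    have h2 := wdist_le_weight hG hpos hxy.symm
    rw [hsymm y x] at h2
    linarith
  constructor
  · linarith
  · rw [abs_sub_le_iff]
    constructor <;> linarith

end main

end DPaux

/-- **Lemma 3.** If `u` and `v` have a common distance-preserving spanning tree in `G`, and
`e = xy` is an edge of `G` with `x ∈ V_i` and `y ∈ V_j`, then `w(e) ≥ d_G(v_i, v_j)` and
`|d_G(v_i, x) − d_G(v_j, y)| ≤ w(e) − d_G(v_i, v_j)`. -/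
theorem edge_condition_of_common_dp_tree {V : Type*} [Fintype V] (G : SimpleGraph V)
    (hG : G.Connected) (w : V → V → ℝ) (hsymm : ∀ a b : V, w a b = w b a)
    (hpos : ∀ a b : V, G.Adj a b → 0 < w a b) (u v : V)
    (T : SimpleGraph V) (hTG : T ≤ G) (hT : T.IsTree)
    (hdpu : ∀ x : V, T.wdist w u x = G.wdist w u x)
    (hdpv : ∀ x : V, T.wdist w v x = G.wdist w v x)
    (P : G.Walk u v) (hP : P.IsPath) (hPshort : P.wlength w = G.wdist w u v)
    (hPuniq : ∀ Q : G.Walk u v, Q.IsPath → Q.wlength w = G.wdist w u v → Q = P) :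
    ∀ i j : ℕ, i ≤ P.length → j ≤ P.length → ∀ x y : V, G.Adj x y →
      x ∈ Vset G w P i → y ∈ Vset G w P j →
      w x y ≥ G.wdist w (P.getVert i) (P.getVert j) ∧
        |G.wdist w (P.getVert i) x - G.wdist w (P.getVert j) y| ≤
          w x y - G.wdist w (P.getVert i) (P.getVert j) := by
  intro i j hi hj x y hxy hx hy
  rcases le_total i j with hij | hij
  · exact DPaux.main_aux hG hsymm hpos hTG hT hdpu hdpv P hPshort hPuniq i j hij x y hxy hx hy
  · obtain ⟨g1, g2⟩ :=
      DPaux.main_aux hG hsymm hpos hTG hT hdpu hdpv P hPshort hPuniq j i hij y x hxy.symm hy hx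
    have e1 : w x y = w y x := hsymm x y
    have e2 : G.wdist w (P.getVert i) (P.getVert j) = G.wdist w (P.getVert j) (P.getVert i) :=
      DPaux.wdist_comm hG hpos hsymm _ _
    refine ⟨by rw [e1, e2]; exact g1, ?_⟩
    rw [abs_sub_comm, e1, e2]
    exact g2
end

section
/- Let G be a connected finite weighted graph with positive edge weights, and let u and v be two vertices of G satisfying: (1) the shortest u-v path P = (u = v_0, v_1, ..., v_k = v) in G is unique; (2) for every vertex x of G there is a unique vertex v_i on P with d_G(x, v_i) = d_G(x, V(P)); and (3) with V_i = {x ∈ V(G) : d_G(x, v_i) = d_G(x, V(P))}, whenever e = xy is an edge of G with x ∈ V_i and y ∈ V_j, one has w(e) ≥ d_G(v_i, v_j) and |d_G(v_i, x) − d_G(v_j, y)| ≤ w(e) − d_G(v_i, v_j). Then G has a spanning tree T that is a common distance-preserving spanning tree of u and v. -/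
open SimpleGraph

section Aux

variable {V : Type*} {G : SimpleGraph V} {w : V → V → ℝ}

lemma aux_wlength_nil (w : V → V → ℝ) {x : V} : (Walk.nil : G.Walk x x).wlength w = 0 := rfl

lemma aux_wlength_cons (w : V → V → ℝ) {x y z : V} (h : G.Adj x y) (p : G.Walk y z) :
    (Walk.cons h p).wlength w = w x y + p.wlength w := by
  simp [Walk.wlength, Walk.darts_cons]

lemma aux_wlength_append (w : V → V → ℝ) {x y z : V} (p : G.Walk x y) (q : G.Walk y z) :
    (p.append q).wlength w = p.wlength w + q.wlength w := by
  simp [Walk.wlength, Walk.darts_append]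

lemma aux_wlength_copy (w : V → V → ℝ) {x y x' y' : V} (p : G.Walk x y)
    (hx : x = x') (hy : y = y') : (p.copy hx hy).wlength w = p.wlength w := by
  subst hx; subst hy; rfl

lemma aux_wlength_reverse (hsymm : ∀ a b : V, w a b = w b a) {x y : V} (p : G.Walk x y) :
    p.reverse.wlength w = p.wlength w := by
  unfold Walk.wlength
  rw [Walk.darts_reverse, List.map_reverse, List.sum_reverse, List.map_map]
  congr 1
  apply List.map_congr_left
  intro d _
  simp [SimpleGraph.Dart.symm, hsymm d.toProd.1 d.toProd.2]

lemma aux_wlength_nonneg (hw : ∀ a b : V, G.Adj a b → 0 ≤ w a b) {x y : V} (p : G.Walk x y) :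
    0 ≤ p.wlength w := by
  apply List.sum_nonneg
  intro r hr
  obtain ⟨d, hd, rfl⟩ := List.mem_map.mp hr
  exact hw _ _ d.adj

lemma aux_wdist_le_wlength (hw : ∀ a b : V, G.Adj a b → 0 ≤ w a b) {x y : V} (p : G.Walk x y) :
    G.wdist w x y ≤ p.wlength w := by
  apply csInf_le
  · exact ⟨0, by rintro r ⟨q, rfl⟩; exact aux_wlength_nonneg hw q⟩
  · exact ⟨p, rfl⟩

lemma aux_wdist_nonneg (hw : ∀ a b : V, G.Adj a b → 0 ≤ w a b) (x y : V) :
    0 ≤ G.wdist w x y := by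
  apply Real.sInf_nonneg
  rintro r ⟨q, rfl⟩
  exact aux_wlength_nonneg hw q

lemma aux_wdist_self (hw : ∀ a b : V, G.Adj a b → 0 ≤ w a b) (x : V) :
    G.wdist w x x = 0 := by
  refine le_antisymm ?_ (aux_wdist_nonneg hw x x)
  simpa [aux_wlength_nil] using aux_wdist_le_wlength hw (Walk.nil : G.Walk x x)

lemma aux_wdist_comm (hsymm : ∀ a b : V, w a b = w b a) (x y : V) :
    G.wdist w x y = G.wdist w y x := by
  unfold SimpleGraph.wdist
  congr 1
  ext r
  constructor
  · rintro ⟨p, rfl⟩; exact ⟨p.reverse, aux_wlength_reverse hsymm p⟩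
  · rintro ⟨p, rfl⟩; exact ⟨p.reverse, aux_wlength_reverse hsymm p⟩

lemma aux_wdist_le_adj (hw : ∀ a b : V, G.Adj a b → 0 ≤ w a b) {x y : V} (h : G.Adj x y) :
    G.wdist w x y ≤ w x y := by
  have := aux_wdist_le_wlength hw (Walk.cons h Walk.nil)
  simpa [aux_wlength_cons, aux_wlength_nil] using this

lemma aux_sum_le_of_nodup_subset {α : Type*} [DecidableEq α] (f : α → ℝ) :
    ∀ (l1 l2 : List α), l1.Nodup → l1 ⊆ l2 → (∀ a ∈ l2, 0 ≤ f a) →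
      (l1.map f).sum ≤ (l2.map f).sum := by
  intro l1
  induction l1 with
  | nil =>
    intro l2 _ _ hpos
    simp only [List.map_nil, List.sum_nil]
    apply List.sum_nonneg
    intro r hr
    obtain ⟨a, ha, rfl⟩ := List.mem_map.mp hr
    exact hpos a ha
  | cons a t ih =>
    intro l2 hnd hsub hpos
    have ha : a ∈ l2 := hsub List.mem_cons_self
    have hperm : List.Perm l2 (a :: l2.erase a) := List.perm_cons_erase ha
    have hsum : (l2.map f).sum = f a + ((l2.erase a).map f).sum := by
      rw [(hperm.map f).sum_eq]; simp
    rw [hsum, List.map_cons, List.sum_cons]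
    have hnd' := hnd
    rw [List.nodup_cons] at hnd'
    have htsub : t ⊆ l2.erase a := by
      intro x hx
      exact (List.mem_erase_of_ne (fun h => hnd'.1 (by subst h; exact hx))).mpr (hsub (List.mem_cons_of_mem a hx))
    have hpos' : ∀ b ∈ l2.erase a, 0 ≤ f b := fun b hb => hpos b (List.erase_subset hb)
    exact add_le_add le_rfl (ih _ hnd'.2 htsub hpos')

lemma aux_wlength_bypass_le [DecidableEq V] (hw : ∀ a b : V, G.Adj a b → 0 ≤ w a b) {x y : V} (p : G.Walk x y) :
    p.bypass.wlength w ≤ p.wlength w := by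
  unfold Walk.wlength
  apply aux_sum_le_of_nodup_subset
  · exact List.Nodup.of_map _ p.bypass_isPath.isTrail.edges_nodup
  · exact p.darts_bypass_subset
  · intro d _; exact hw _ _ d.adj

lemma aux_exists_shortest [Fintype V] (hw : ∀ a b : V, G.Adj a b → 0 ≤ w a b) {x y : V}
    (hreach : G.Reachable x y) :
    ∃ p : G.Walk x y, p.IsPath ∧ p.wlength w = G.wdist w x y := by
  classical
  haveI : G.LocallyFinite := fun v => Fintype.ofFinite _
  set N := Fintype.card V with hN
  set F : Finset ℝ :=
    ((G.finsetWalkLengthLT N x y).filter (fun p => p.IsPath)).image (fun p => p.wlength w) with hF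
  have hmemF : ∀ p : G.Walk x y, p.IsPath → p.wlength w ∈ F := by
    intro p hp
    apply Finset.mem_image_of_mem
    rw [Finset.mem_filter]
    exact ⟨SimpleGraph.mem_finsetWalkLengthLT_iff.mpr hp.length_lt, hp⟩
  obtain ⟨q0⟩ := hreach
  have hFne : F.Nonempty := ⟨_, hmemF q0.bypass q0.bypass_isPath⟩
  obtain ⟨r0, hr0F, hr0min⟩ := F.exists_min_image id hFne
  obtain ⟨p0, hp0, hp0len⟩ := Finset.mem_image.mp hr0F
  rw [Finset.mem_filter] at hp0
  have hlb : ∀ r ∈ {r : ℝ | ∃ p : G.Walk x y, p.wlength w = r}, r0 ≤ r := by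
    rintro r ⟨q, rfl⟩
    calc r0 ≤ q.bypass.wlength w := hr0min _ (hmemF q.bypass q.bypass_isPath)
      _ ≤ q.wlength w := aux_wlength_bypass_le hw q
  have : G.wdist w x y = r0 := by
    apply le_antisymm
    · exact csInf_le ⟨r0, hlb⟩ ⟨p0, hp0len⟩
    · exact le_csInf ⟨r0, ⟨p0, hp0len⟩⟩ hlb
  exact ⟨p0, hp0.2, by rw [hp0len, this]⟩

lemma aux_wdist_triangle [Fintype V] (hw : ∀ a b : V, G.Adj a b → 0 ≤ w a b) {x y z : V}
    (hxy : G.Reachable x y) (hyz : G.Reachable y z) :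
    G.wdist w x z ≤ G.wdist w x y + G.wdist w y z := by
  obtain ⟨p, _, hp⟩ := aux_exists_shortest hw hxy
  obtain ⟨q, _, hq⟩ := aux_exists_shortest hw hyz
  calc G.wdist w x z ≤ (p.append q).wlength w := aux_wdist_le_wlength hw _
    _ = p.wlength w + q.wlength w := aux_wlength_append w p q
    _ = _ := by rw [hp, hq]

lemma aux_eq_of_wdist_zero [Fintype V] (hpos : ∀ a b : V, G.Adj a b → 0 < w a b) {x y : V}
    (hreach : G.Reachable x y) (h : G.wdist w x y = 0) : x = y := by
  have hw : ∀ a b : V, G.Adj a b → 0 ≤ w a b := fun a b h => (hpos a b h).le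
  obtain ⟨p, _, hp⟩ := aux_exists_shortest hw hreach
  cases p with
  | nil => rfl
  | cons hadj q =>
    exfalso
    rw [aux_wlength_cons, h] at hp
    have h1 := hpos _ _ hadj
    have h2 := aux_wlength_nonneg hw q
    linarith

lemma aux_wlength_mapLe {G' : SimpleGraph V} (hle : G ≤ G') {x y : V} (p : G.Walk x y) :
    (p.mapLe hle).wlength w = p.wlength w := by
  induction p with
  | nil => rfl
  | cons hadj q ih =>
    unfold Walk.mapLe at *
    rw [Walk.map_cons]
    rw [aux_wlength_cons, aux_wlength_cons, ih]
    rfl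

lemma aux_wdist_anti {G' : SimpleGraph V} (hle : G ≤ G')
    (hw : ∀ a b : V, G'.Adj a b → 0 ≤ w a b) {x y : V} (p : G.Walk x y) :
    G'.wdist w x y ≤ G.wdist w x y := by
  refine le_csInf ⟨p.wlength w, ⟨p, rfl⟩⟩ ?_
  rintro r ⟨q, rfl⟩
  calc G'.wdist w x y ≤ (q.mapLe hle).wlength w := aux_wdist_le_wlength hw _
    _ = q.wlength w := aux_wlength_mapLe hle q

end Aux

lemma aux_walk_split {V : Type*} {G : SimpleGraph V} (w : V → V → ℝ) {a b : V} (p : G.Walk a b) :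
    ∀ i, i < p.length → ∃ (q : G.Walk a (p.getVert i)) (r : G.Walk (p.getVert (i+1)) b),
      q.wlength w + w (p.getVert i) (p.getVert (i+1)) + r.wlength w = p.wlength w := by
  induction p with
  | nil => intro i h; simp at h
  | @cons a c b hadj p ih =>
    intro i hi
    cases i with
    | zero =>
      refine ⟨(Walk.nil : G.Walk a a).copy rfl ((Walk.cons hadj p).getVert_zero).symm,
        p.copy (by rw [Walk.getVert_cons_succ]; exact (p.getVert_zero).symm) rfl, ?_⟩
      rw [aux_wlength_copy, aux_wlength_copy, aux_wlength_nil, aux_wlength_cons]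
      rw [(Walk.cons hadj p).getVert_zero, Walk.getVert_cons_succ, p.getVert_zero]
      ring
    | succ j =>
      have hj : j < p.length := by
        simp only [Walk.length_cons] at hi; omega
      obtain ⟨q, r, hqr⟩ := ih j hj
      refine ⟨(Walk.cons hadj q).copy rfl (Walk.getVert_cons_succ p hadj).symm,
        r.copy (Walk.getVert_cons_succ p hadj).symm rfl, ?_⟩
      rw [aux_wlength_copy, aux_wlength_copy, aux_wlength_cons, aux_wlength_cons]
      rw [Walk.getVert_cons_succ, Walk.getVert_cons_succ]
      linarith
/-- **Sufficiency.** If (1) the shortest `u`-`v` path `P` in `G` is unique, (2) every vertex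
has a unique nearest vertex on `P`, and (3) every edge `xy` with `x ∈ V_i`, `y ∈ V_j`
satisfies `w(e) ≥ d_G(v_i, v_j)` and `|d_G(v_i,x) − d_G(v_j,y)| ≤ w(e) − d_G(v_i,v_j)`,
then `G` has a common distance-preserving spanning tree of `u` and `v`. -/
theorem exists_common_dp_tree {V : Type*} [Fintype V] (G : SimpleGraph V)
    (hG : G.Connected) (w : V → V → ℝ) (hsymm : ∀ a b : V, w a b = w b a)
    (hpos : ∀ a b : V, G.Adj a b → 0 < w a b) (u v : V)
    (P : G.Walk u v) (hP : P.IsPath) (hPshort : P.wlength w = G.wdist w u v)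
    (hPuniq : ∀ Q : G.Walk u v, Q.IsPath → Q.wlength w = G.wdist w u v → Q = P)
    (hnear : ∀ x : V, ∃! y : V, y ∈ P.support ∧
      G.wdist w x y = G.wdistS w x {z | z ∈ P.support})
    (hedge : ∀ i j : ℕ, i ≤ P.length → j ≤ P.length → ∀ x y : V, G.Adj x y →
      x ∈ Vset G w P i → y ∈ Vset G w P j →
      w x y ≥ G.wdist w (P.getVert i) (P.getVert j) ∧
        |G.wdist w (P.getVert i) x - G.wdist w (P.getVert j) y| ≤
          w x y - G.wdist w (P.getVert i) (P.getVert j)) :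
    ∃ T : SimpleGraph V, T ≤ G ∧ T.IsTree ∧
      (∀ x : V, T.wdist w u x = G.wdist w u x) ∧
      (∀ x : V, T.wdist w v x = G.wdist w v x) := by
  classical
  have hw0 : ∀ a b : V, G.Adj a b → 0 ≤ w a b := fun a b h => (hpos a b h).le
  have hreach : ∀ a b : V, G.Reachable a b := fun a b => hG.preconnected a b
  have dcomm : ∀ a b : V, G.wdist w a b = G.wdist w b a := aux_wdist_comm hsymm
  have dtri : ∀ a b c : V, G.wdist w a c ≤ G.wdist w a b + G.wdist w b c :=
    fun a b c => aux_wdist_triangle hw0 (hreach a b) (hreach b c)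
  have dzero : ∀ a b : V, G.wdist w a b = 0 → a = b :=
    fun a b h => aux_eq_of_wdist_zero hpos (hreach a b) h
  have dnn : ∀ a b : V, 0 ≤ G.wdist w a b := aux_wdist_nonneg hw0
  have dself : ∀ a : V, G.wdist w a a = 0 := aux_wdist_self hw0
  -- the nearest-vertex function on P
  have hnex : ∀ x : V, ∃ y, y ∈ P.support ∧
      G.wdist w x y = G.wdistS w x {z | z ∈ P.support} := fun x => (hnear x).exists
  choose n hn1a hn1b using hnex
  have hnuniq : ∀ x z : V, z ∈ P.support →
      G.wdist w x z = G.wdistS w x {z' | z' ∈ P.support} → z = n x :=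
    fun x z hz hd => (hnear x).unique ⟨hz, hd⟩ ⟨hn1a x, hn1b x⟩
  have hSnn : ∀ x : V, 0 ≤ G.wdistS w x {z | z ∈ P.support} := by
    intro x; apply Real.sInf_nonneg; rintro r ⟨z, _, rfl⟩; exact dnn x z
  have hSle : ∀ x z : V, z ∈ P.support →
      G.wdistS w x {z' | z' ∈ P.support} ≤ G.wdist w x z := by
    intro x z hz
    apply csInf_le ⟨0, by rintro r ⟨z', _, rfl⟩; exact dnn x z'⟩
    exact Set.mem_image_of_mem _ hz
  have hnsupp : ∀ z, z ∈ P.support → n z = z := by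
    intro z hz
    have h1 : G.wdist w z z = G.wdistS w z {z' | z' ∈ P.support} := by
      rw [dself z]
      refine le_antisymm (hSnn z) ?_
      have := hSle z z hz; rw [dself z] at this; exact this
    exact (hnuniq z z hz h1).symm
  have hnu : n u = u := hnsupp u P.start_mem_support
  have hnv : n v = v := hnsupp v P.end_mem_support
  have hnd0 : ∀ x : V, G.wdist w (n x) x = G.wdistS w x {z | z ∈ P.support} :=
    fun x => (dcomm (n x) x).trans (hn1b x)
  -- the crossing-edge inequality
  have hcross : ∀ x y : V, G.Adj x y →
      G.wdist w (n x) (n y) + G.wdist w (n y) y - G.wdist w (n x) x ≤ w x y := by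
    intro x y hadj
    obtain ⟨i, hgi, hik⟩ := Walk.mem_support_iff_exists_getVert.mp (hn1a x)
    obtain ⟨j, hgj, hjk⟩ := Walk.mem_support_iff_exists_getVert.mp (hn1a y)
    have hx : x ∈ Vset G w P i := by
      show G.wdist w x (P.getVert i) = _
      rw [hgi]; exact hn1b x
    have hy : y ∈ Vset G w P j := by
      show G.wdist w y (P.getVert j) = _
      rw [hgj]; exact hn1b y
    obtain ⟨h1, h2⟩ := hedge i j hik hjk x y hadj hx hy
    rw [hgi, hgj] at h2
    have h3 := (abs_le.mp h2).1
    linarith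
  -- the telescoping inequality
  have htel : ∀ (a b : V) (q : G.Walk a b),
      G.wdist w (n a) (n b) + G.wdist w (n b) b - G.wdist w (n a) a ≤ q.wlength w := by
    intro a0 b0 q
    induction q with
    | nil => rename_i z; simp only [aux_wlength_nil]; have := dself (n z); linarith
    | @cons a c b hadj q ih =>
      rw [aux_wlength_cons]
      have h1 := hcross a c hadj
      have h3 := dtri (n a) (n c) (n b)
      linarith
  -- the key distance decomposition
  have hKEY : ∀ s x : V, n s = s →
      G.wdist w s x = G.wdist w s (n x) + G.wdist w (n x) x := by
    intro s x hns
    obtain ⟨p, _, hp⟩ := aux_exists_shortest hw0 (hreach s x)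
    refine le_antisymm (dtri s (n x) x) ?_
    have h := htel s x p
    rw [hns, hp] at h
    have := dself s
    linarith
  -- step facts along P
  have hadjP : ∀ i, i < P.length → G.Adj (P.getVert i) (P.getVert (i+1)) :=
    fun i hi => P.adj_getVert_succ hi
  have hstep : ∀ i, i < P.length →
      G.wdist w u (P.getVert (i+1)) =
        G.wdist w u (P.getVert i) + w (P.getVert i) (P.getVert (i+1)) ∧
      G.wdist w (P.getVert i) v =
        w (P.getVert i) (P.getVert (i+1)) + G.wdist w (P.getVert (i+1)) v := by
    intro i hi
    obtain ⟨q, r, hqr⟩ := aux_walk_split w P i hi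
    rw [hPshort] at hqr
    have h1 : G.wdist w u (P.getVert i) ≤ q.wlength w := aux_wdist_le_wlength hw0 q
    have h2 : G.wdist w (P.getVert (i+1)) v ≤ r.wlength w := aux_wdist_le_wlength hw0 r
    have h3 : G.wdist w (P.getVert i) (P.getVert (i+1)) ≤ w (P.getVert i) (P.getVert (i+1)) :=
      aux_wdist_le_adj hw0 (hadjP i hi)
    have t1 : G.wdist w u v ≤ G.wdist w u (P.getVert i) +
        G.wdist w (P.getVert i) (P.getVert (i+1)) + G.wdist w (P.getVert (i+1)) v := by
      linarith [dtri u (P.getVert i) v, dtri (P.getVert i) (P.getVert (i+1)) v]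
    have e1 : q.wlength w = G.wdist w u (P.getVert i) := by linarith
    have e2 : r.wlength w = G.wdist w (P.getVert (i+1)) v := by linarith
    have e3 : G.wdist w (P.getVert i) (P.getVert (i+1)) =
        w (P.getVert i) (P.getVert (i+1)) := by linarith
    constructor
    · refine le_antisymm ?_ ?_
      · linarith [dtri u (P.getVert i) (P.getVert (i+1))]
      · linarith [dtri u (P.getVert (i+1)) v]
    · refine le_antisymm ?_ ?_
      · linarith [dtri (P.getVert i) (P.getVert (i+1)) v]
      · linarith [dtri u (P.getVert i) v]
  have hLmono : ∀ j, j ≤ P.length → ∀ i, i < j →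
      G.wdist w u (P.getVert i) < G.wdist w u (P.getVert j) := by
    intro j
    induction j with
    | zero => intro _ i hi; omega
    | succ j ih =>
      intro hjk i hi
      have hjlt : j < P.length := by omega
      have hw' := hpos _ _ (hadjP j hjlt)
      have hstepj := (hstep j hjlt).1
      rcases Nat.lt_succ_iff_lt_or_eq.mp hi with hij | rfl
      · have := ih (le_of_lt hjlt) i hij; linarith
      · linarith
  have hginj : ∀ i, i ≤ P.length → ∀ j, j ≤ P.length →
      P.getVert i = P.getVert j → i = j := by
    intro i hi j hj heq
    by_contra hne
    rcases lt_or_gt_of_ne hne with h | h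
    · have := hLmono j hj i h; rw [heq] at this; exact lt_irrefl _ this
    · have := hLmono i hi j h; rw [heq] at this; exact lt_irrefl _ this
  -- parent function
  have hpar_ex : ∀ x : V, ∃ y : V, x ≠ u →
      ((∃ i, i ≤ P.length ∧ i ≠ 0 ∧ P.getVert i = x ∧ y = P.getVert (i-1)) ∨
       (x ∉ P.support ∧ G.Adj x y ∧ n y = n x ∧
         G.wdist w (n x) y + w x y = G.wdist w (n x) x ∧
         G.wdist w (n x) y < G.wdist w (n x) x)) := by
    intro x
    by_cases hxu : x = u
    · exact ⟨x, fun h => absurd hxu h⟩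
    by_cases hsupp : x ∈ P.support
    · obtain ⟨i, hgi, hik⟩ := Walk.mem_support_iff_exists_getVert.mp hsupp
      have hi0 : i ≠ 0 := by
        intro h; subst h; rw [P.getVert_zero] at hgi; exact hxu hgi.symm
      exact ⟨P.getVert (i-1), fun _ => Or.inl ⟨i, hik, hi0, hgi, rfl⟩⟩
    · have hxn : x ≠ n x := fun h => hsupp (h ▸ (hn1a x))
      obtain ⟨p, _, hp⟩ := aux_exists_shortest hw0 (hreach (n x) x)
      have hnotnil : ¬ p.reverse.Nil := by
        intro hnil
        rw [Walk.nil_iff_length_eq] at hnil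
        have h0 : p.reverse.getVert 0 = x := p.reverse.getVert_zero
        have h1 := p.reverse.getVert_length
        rw [hnil] at h1
        exact hxn (h0.symm.trans h1)
      obtain ⟨y, hadj, q, hq⟩ := Walk.not_nil_iff.mp hnotnil
      have hlen : w x y + q.wlength w = G.wdist w (n x) x := by
        have hrev := aux_wlength_reverse hsymm p
        rw [hq, aux_wlength_cons] at hrev
        rw [← hp]; exact hrev
      have h1 : G.wdist w (n x) y ≤ G.wdist w (n x) x - w x y := by
        have hq1 := aux_wdist_le_wlength hw0 q
        have hc := dcomm (n x) y
        linarith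
      have h2 : G.wdist w (n x) x ≤ G.wdist w (n x) y + w x y := by
        have t := dtri (n x) y x
        have hyx := aux_wdist_le_adj hw0 hadj.symm
        have hs := hsymm x y
        linarith
      have heq : G.wdist w (n x) y = G.wdist w (n x) x - w x y := le_antisymm h1 (by linarith)
      have hlt : G.wdist w (n x) y < G.wdist w (n x) x := by
        have := hpos x y hadj; linarith
      have hny : n y = n x := by
        have hc := hcross y x hadj.symm
        have hy1 : G.wdist w (n y) y ≤ G.wdist w (n x) y := by
          have hA := hSle y (n x) (hn1a x)
          have hB := hnd0 y
          have hC := dcomm y (n x)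
          linarith
        have hs := hsymm y x
        have hle0 : G.wdist w (n y) (n x) ≤ 0 := by linarith
        exact dzero _ _ (le_antisymm hle0 (dnn _ _))
      exact ⟨y, fun _ => Or.inr ⟨hsupp, hadj, hny, by linarith, hlt⟩⟩
  choose par hpar using hpar_ex
  -- the tree
  set T : SimpleGraph V := SimpleGraph.fromRel (fun a b => a ≠ u ∧ par a = b) with hT
  have hTadj_iff : ∀ a b : V, T.Adj a b ↔
      a ≠ b ∧ ((a ≠ u ∧ par a = b) ∨ (b ≠ u ∧ par b = a)) := by
    intro a b; rw [hT]; exact SimpleGraph.fromRel_adj _ a b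
  have hGadj_par : ∀ x : V, x ≠ u → G.Adj x (par x) := by
    intro x hx
    rcases hpar x hx with ⟨i, hik, hi0, hgi, hy⟩ | ⟨_, hadj, _⟩
    · rw [hy, ← hgi]
      have hlt : i - 1 < P.length := by omega
      have hadj := P.adj_getVert_succ hlt
      rw [Nat.sub_add_cancel (Nat.one_le_iff_ne_zero.mpr hi0)] at hadj
      exact hadj.symm
    · exact hadj
  have hTadj_par : ∀ x : V, x ≠ u → T.Adj x (par x) := by
    intro x hx
    rw [hTadj_iff]
    exact ⟨(hGadj_par x hx).ne, Or.inl ⟨hx, rfl⟩⟩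
  have hTG : T ≤ G := by
    intro a b hab
    rw [hTadj_iff] at hab
    rcases hab.2 with ⟨ha, rfl⟩ | ⟨hb, rfl⟩
    · exact hGadj_par a ha
    · exact (hGadj_par b hb).symm
  have hwT : ∀ a b : V, T.Adj a b → 0 ≤ w a b := fun a b h => hw0 a b (hTG h)
  -- strict decrease of the potential along parents
  have hρpar : ∀ x : V, x ≠ u → G.wdist w u (par x) < G.wdist w u x := by
    intro x hx
    rcases hpar x hx with ⟨i, hik, hi0, hgi, hy⟩ | ⟨hnsuppx, hadj, hny, hsum, hlt⟩
    · rw [hy, ← hgi]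
      exact hLmono i hik (i-1) (by omega)
    · rw [hKEY u x hnu, hKEY u (par x) hnu, hny]
      linarith
  -- climbing walks toward the nearest P-vertex
  have hC1 : ∀ x : V, ∃ W : T.Walk x (n x), W.wlength w = G.wdist w (n x) x := by
    have hbase : ∀ x : V, x ∈ P.support →
        ∃ W : T.Walk x (n x), W.wlength w = G.wdist w (n x) x := by
      intro x hx
      refine ⟨(Walk.nil : T.Walk x x).copy rfl (hnsupp x hx).symm, ?_⟩
      rw [aux_wlength_copy, aux_wlength_nil, hnsupp x hx, dself]
    have main : ∀ (m : ℕ) (x : V),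
        (Finset.univ.filter (fun y => G.wdist w u y < G.wdist w u x)).card ≤ m →
        ∃ W : T.Walk x (n x), W.wlength w = G.wdist w (n x) x := by
      intro m
      induction m with
      | zero =>
        intro x hcard
        by_cases hsupp : x ∈ P.support
        · exact hbase x hsupp
        · exfalso
          have hxu : x ≠ u := fun h => hsupp (h ▸ P.start_mem_support)
          have hmem : par x ∈ Finset.univ.filter
              (fun y => G.wdist w u y < G.wdist w u x) :=
            Finset.mem_filter.mpr ⟨Finset.mem_univ _, hρpar x hxu⟩
          have := Finset.card_pos.mpr ⟨_, hmem⟩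
          omega
      | succ m ih =>
        intro x hcard
        by_cases hsupp : x ∈ P.support
        · exact hbase x hsupp
        · have hxu : x ≠ u := fun h => hsupp (h ▸ P.start_mem_support)
          rcases hpar x hxu with ⟨i, hik, hi0, hgi, hy⟩ | ⟨_, hadj, hny, hsum, hlt⟩
          · exact absurd (hgi ▸ Walk.mem_support_iff_exists_getVert.mpr ⟨i, rfl, hik⟩) hsupp
          · have hcard' : (Finset.univ.filter
                (fun y => G.wdist w u y < G.wdist w u (par x))).card ≤ m := by
              have hss : Finset.univ.filter
                  (fun y => G.wdist w u y < G.wdist w u (par x)) ⊂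
                  Finset.univ.filter (fun y => G.wdist w u y < G.wdist w u x) := by
                constructor
                · intro z hz
                  rw [Finset.mem_filter] at *
                  exact ⟨Finset.mem_univ _, lt_trans hz.2 (hρpar x hxu)⟩
                · intro hsub
                  have hmem : par x ∈ Finset.univ.filter
                      (fun y => G.wdist w u y < G.wdist w u x) :=
                    Finset.mem_filter.mpr ⟨Finset.mem_univ _, hρpar x hxu⟩
                  have := (Finset.mem_filter.mp (hsub hmem)).2
                  exact lt_irrefl _ this
              have := Finset.card_lt_card hss
              omega
            obtain ⟨W', hW'⟩ := ih (par x) hcard'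
            refine ⟨Walk.cons (hTadj_par x hxu) (W'.copy rfl (by rw [hny])), ?_⟩
            rw [aux_wlength_cons, aux_wlength_copy, hW', hny]
            linarith
    intro x; exact main _ x le_rfl
  -- consecutive P-vertices are T-adjacent
  have hTadjP : ∀ i, i < P.length → T.Adj (P.getVert (i+1)) (P.getVert i) := by
    intro i hi
    have hne : P.getVert (i+1) ≠ u := by
      intro h
      have h0 : P.getVert (i+1) = P.getVert 0 := by rw [h, P.getVert_zero]
      have := hginj (i+1) (by omega) 0 (by omega) h0
      omega
    have hp := hpar (P.getVert (i+1)) hne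
    rcases hp with ⟨i', hik', hi0', hgi', hy'⟩ | ⟨hns, _⟩
    · have hii : i' = i + 1 := hginj i' hik' (i+1) (by omega) hgi'
      have hpareq : par (P.getVert (i+1)) = P.getVert i := by
        rw [hy', hii]
        norm_num
      have := hTadj_par (P.getVert (i+1)) hne
      rw [hpareq] at this
      exact this
    · exact absurd (Walk.mem_support_iff_exists_getVert.mpr ⟨i+1, rfl, by omega⟩) hns
  -- walks along P to u
  have hC2u : ∀ i, i ≤ P.length →
      ∃ W : T.Walk (P.getVert i) u, W.wlength w = G.wdist w u (P.getVert i) := by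
    intro i
    induction i with
    | zero =>
      intro _
      refine ⟨(Walk.nil : T.Walk u u).copy P.getVert_zero.symm rfl, ?_⟩
      rw [aux_wlength_copy, aux_wlength_nil, P.getVert_zero, dself]
    | succ i ih =>
      intro hik
      obtain ⟨W, hW⟩ := ih (by omega)
      have hi : i < P.length := by omega
      refine ⟨Walk.cons (hTadjP i hi) W, ?_⟩
      rw [aux_wlength_cons, hW, (hstep i hi).1,
        hsymm (P.getVert (i+1)) (P.getVert i)]
      ring
  -- walks along P to v
  have hC2v : ∀ j, j ≤ P.length →
      ∃ W : T.Walk (P.getVert (P.length - j)) v,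
        W.wlength w = G.wdist w (P.getVert (P.length - j)) v := by
    intro j
    induction j with
    | zero =>
      intro _
      simp only [Nat.sub_zero]
      refine ⟨(Walk.nil : T.Walk v v).copy P.getVert_length.symm rfl, ?_⟩
      rw [aux_wlength_copy, aux_wlength_nil, P.getVert_length, dself]
    | succ j ih =>
      intro hjk
      obtain ⟨W, hW⟩ := ih (by omega)
      have hilt : P.length - (j+1) < P.length := by omega
      have hieq : P.length - j = (P.length - (j+1)) + 1 := by omega
      refine ⟨Walk.cons (hTadjP _ hilt).symm (W.copy (by rw [hieq]) rfl), ?_⟩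
      rw [aux_wlength_cons, aux_wlength_copy, hW]
      have hre : G.wdist w (P.getVert (P.length - j)) v =
          G.wdist w (P.getVert ((P.length - (j+1)) + 1)) v := by rw [hieq]
      rw [hre, (hstep _ hilt).2]
  -- the full walks
  have hwalkU : ∀ x : V, ∃ W : T.Walk x u, W.wlength w = G.wdist w u x := by
    intro x
    obtain ⟨i, hgi, hik⟩ := Walk.mem_support_iff_exists_getVert.mp (hn1a x)
    obtain ⟨W1, hW1⟩ := hC1 x
    obtain ⟨W2, hW2⟩ := hC2u i hik
    refine ⟨W1.append (W2.copy (by rw [hgi]) rfl), ?_⟩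
    rw [aux_wlength_append, aux_wlength_copy, hW1, hW2, hKEY u x hnu]
    have h : G.wdist w u (P.getVert i) = G.wdist w u (n x) := by rw [hgi]
    linarith
  have hwalkV : ∀ x : V, ∃ W : T.Walk x v, W.wlength w = G.wdist w v x := by
    intro x
    obtain ⟨i, hgi, hik⟩ := Walk.mem_support_iff_exists_getVert.mp (hn1a x)
    obtain ⟨W1, hW1⟩ := hC1 x
    have hji : P.length - (P.length - i) = i := by omega
    obtain ⟨W2, hW2⟩ := hC2v (P.length - i) (by omega)
    refine ⟨W1.append (W2.copy (by rw [hji, hgi]) rfl), ?_⟩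
    rw [aux_wlength_append, aux_wlength_copy, hW1, hW2, hKEY v x hnv]
    have h : G.wdist w (P.getVert (P.length - (P.length - i))) v =
        G.wdist w v (n x) := by rw [hji, hgi, dcomm]
    linarith
  -- distance preservation
  have hdistU : ∀ x : V, T.wdist w u x = G.wdist w u x := by
    intro x
    obtain ⟨W, hW⟩ := hwalkU x
    refine le_antisymm ?_ ?_
    · calc T.wdist w u x = T.wdist w x u := aux_wdist_comm hsymm u x
        _ ≤ W.wlength w := aux_wdist_le_wlength hwT W
        _ = G.wdist w u x := hW
    · exact aux_wdist_anti hTG hw0 W.reverse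
  have hdistV : ∀ x : V, T.wdist w v x = G.wdist w v x := by
    intro x
    obtain ⟨W, hW⟩ := hwalkV x
    refine le_antisymm ?_ ?_
    · calc T.wdist w v x = T.wdist w x v := aux_wdist_comm hsymm v x
        _ ≤ W.wlength w := aux_wdist_le_wlength hwT W
        _ = G.wdist w v x := hW
    · exact aux_wdist_anti hTG hw0 W.reverse
  -- connectivity
  have hconn : T.Connected := by
    rw [connected_iff]
    refine ⟨?_, ⟨u⟩⟩
    intro x y
    exact Nonempty.intro ((hwalkU x).choose.append (hwalkU y).choose.reverse)
  -- acyclicity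
  have hacyc : T.IsAcyclic := by
    intro a c hc
    have hFne : (c.support.toFinset : Finset V).Nonempty :=
      ⟨a, List.mem_toFinset.mpr c.start_mem_support⟩
    obtain ⟨m, hmF, hmax⟩ :=
      Finset.exists_max_image c.support.toFinset (fun z => G.wdist w u z) hFne
    have hm : m ∈ c.support := List.mem_toFinset.mp hmF
    have hc' : (c.rotate m hm).IsCycle := hc.rotate hm
    have hmax' : ∀ z, z ∈ (c.rotate m hm).support → G.wdist w u z ≤ G.wdist w u m := by
      intro z hz
      apply hmax z
      rw [List.mem_toFinset]
      rw [(c.rotate m hm).support_eq_cons] at hz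
      rcases List.mem_cons.mp hz with rfl | htail
      · exact hm
      · have hperm := Walk.support_rotate c m hm
        exact List.mem_of_mem_tail (hperm.mem_iff.mp htail)
    -- key: any T-neighbor of m with potential ≤ that of m is par m
    have hkey : ∀ b : V, T.Adj m b → b ∈ (c.rotate m hm).support → b = par m := by
      intro b hadj hbs
      rw [hTadj_iff] at hadj
      rcases hadj.2 with ⟨hmu, hpm⟩ | ⟨hbu, hpb⟩
      · exact hpm.symm
      · exfalso
        have h1 := hρpar b hbu
        rw [hpb] at h1
        have h2 := hmax' b hbs
        linarith
    have hnn1 : ¬ (c.rotate m hm).Nil := by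
      have := hc'.three_le_length
      rw [Walk.not_nil_iff_lt_length]; omega
    obtain ⟨b1, hadj1, q, hq⟩ := Walk.not_nil_iff.mp hnn1
    have hedges : s(m, b1) ∉ q.edges := by
      have hnd := hc'.isCircuit.isTrail.edges_nodup
      rw [hq, Walk.edges_cons] at hnd
      exact (List.nodup_cons.mp hnd).1
    have hb1s : b1 ∈ (c.rotate m hm).support := by
      rw [hq, Walk.support_cons]
      exact List.mem_cons_of_mem _ q.start_mem_support
    have hb1 : b1 = par m := hkey b1 hadj1 hb1s
    have hqnn : ¬ q.Nil := by
      intro hnil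
      rw [Walk.nil_iff_length_eq] at hnil
      have h0 := q.getVert_zero
      have h1 := q.getVert_length
      rw [hnil] at h1
      exact hadj1.ne (h0.symm.trans h1).symm
    have hqrnn : ¬ q.reverse.Nil := by
      rw [Walk.not_nil_iff_lt_length] at hqnn ⊢
      rw [Walk.length_reverse]
      exact hqnn
    obtain ⟨b2, hadj2, r, hr⟩ := Walk.not_nil_iff.mp hqrnn
    have hb2s : b2 ∈ (c.rotate m hm).support := by
      have hb2q : b2 ∈ q.reverse.support := by
        rw [hr, Walk.support_cons]
        exact List.mem_cons_of_mem _ r.start_mem_support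
      rw [Walk.support_reverse, List.mem_reverse] at hb2q
      rw [hq, Walk.support_cons]
      exact List.mem_cons_of_mem _ hb2q
    have hb2 : b2 = par m := hkey b2 hadj2 hb2s
    have hmem : s(m, b2) ∈ q.edges := by
      have : s(m, b2) ∈ q.reverse.edges := by
        rw [hr, Walk.edges_cons]
        exact List.mem_cons_self
      rw [Walk.edges_reverse, List.mem_reverse] at this
      exact this
    rw [hb2, ← hb1] at hmem
    exact hedges hmem
  exact ⟨T, hTG, (SimpleGraph.isTree_iff T).mpr ⟨hconn, hacyc⟩ , hdistU, hdistV⟩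
end

section
/- Let G be a connected finite weighted graph with positive edge weights, and let u and v be two vertices of G satisfying: (1) the shortest u-v path P = (u = v_0, v_1, ..., v_k = v) in G is unique, and (2) for every vertex x of G there is a unique vertex v_i on P with d_G(x, v_i) = d_G(x, V(P)). For 0 ≤ i ≤ k let V_i = {x ∈ V(G) : d_G(x, v_i) = d_G(x, V(P))} and let T_i be any spanning tree of the induced subgraph G[V_i]. Then the subgraph T of G with vertex set V(G) and edge set E(T) = E(P) ∪ E(T_0) ∪ E(T_1) ∪ ... ∪ E(T_k) is a spanning tree of G. -/
open SimpleGraph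

private lemma getVert_mem_support' {V : Type*} {G : SimpleGraph V} {a b : V} (p : G.Walk a b)
    {n : ℕ} (hn : n ≤ p.length) : p.getVert n ∈ p.support :=
  Walk.mem_support_iff_exists_getVert.mpr ⟨n, rfl, hn⟩

private lemma getVert_injOn' {V : Type*} {G : SimpleGraph V} {a b : V} (p : G.Walk a b)
    (hp : p.IsPath) : ∀ i ≤ p.length, ∀ j ≤ p.length, p.getVert i = p.getVert j → i = j := by
  induction p with
  | nil => intro i hi j hj _; simp only [Walk.length_nil, Nat.le_zero] at hi hj; omega
  | @cons a a' b h q ih =>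
    intro i hi j hj hij
    rw [Walk.cons_isPath_iff] at hp
    rw [Walk.length_cons] at hi hj
    match i, j with
    | 0, 0 => rfl
    | 0, j+1 =>
      exfalso
      rw [Walk.getVert_zero, Walk.getVert_cons_succ] at hij
      exact hp.2 (hij ▸ getVert_mem_support' q (by omega))
    | i+1, 0 =>
      exfalso
      rw [Walk.getVert_zero, Walk.getVert_cons_succ] at hij
      exact hp.2 (hij ▸ getVert_mem_support' q (by omega))
    | i+1, j+1 =>
      rw [Walk.getVert_cons_succ, Walk.getVert_cons_succ] at hij
      have := ih hp.1 i (by omega) j (by omega) hij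
      omega

private lemma edges_mem_iff' {V : Type*} {G : SimpleGraph V} {a b : V} (p : G.Walk a b)
    {e : Sym2 V} (he : e ∈ p.edges) :
    ∃ j, j < p.length ∧ e = s(p.getVert j, p.getVert (j+1)) := by
  induction p with
  | nil => simp at he
  | @cons a a' b h q ih =>
    rw [Walk.edges_cons, List.mem_cons] at he
    rcases he with rfl | he
    · exact ⟨0, by simp, by rw [Walk.getVert_zero, Walk.getVert_cons_succ, Walk.getVert_zero]⟩
    · obtain ⟨j, hj, rfl⟩ := ih he
      exact ⟨j+1, by simp [Walk.length_cons]; omega,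
        by rw [Walk.getVert_cons_succ, Walk.getVert_cons_succ]⟩

private lemma getVert_edge_mem' {V : Type*} {G : SimpleGraph V} {a b : V} (p : G.Walk a b)
    {j : ℕ} (hj : j < p.length) : s(p.getVert j, p.getVert (j+1)) ∈ p.edges := by
  induction p generalizing j with
  | nil => simp at hj
  | @cons a a' b h q ih =>
    cases j with
    | zero =>
      rw [Walk.getVert_zero, Walk.getVert_cons_succ, Walk.getVert_zero]
      simp [Walk.edges_cons]
    | succ j =>
      rw [Walk.getVert_cons_succ, Walk.getVert_cons_succ]
      rw [Walk.length_cons] at hj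
      exact List.mem_cons_of_mem _ (ih (by omega))

private lemma walk_invariant' {V : Type*} {H : SimpleGraph V} (Q : V → Prop)
    (hQ : ∀ a b, H.Adj a b → (Q a ↔ Q b)) {x y : V} (p : H.Walk x y) : Q x ↔ Q y := by
  induction p with
  | nil => exact Iff.rfl
  | cons h q ih => exact (hQ _ _ h).trans ih

/-- Under conditions (1) and (2), gluing spanning trees `T_i` of the induced subgraphs
`G[V_i]` onto the unique shortest `u`-`v` path `P` yields a spanning tree of `G`:
the graph with edge set `E(P) ∪ E(T_0) ∪ E(T_1) ∪ ⋯ ∪ E(T_k)` is a spanning tree of `G`. -/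
theorem glued_graph_is_spanning_tree {V : Type*} [Fintype V] (G : SimpleGraph V)
    (hG : G.Connected) (w : V → V → ℝ) (hsymm : ∀ a b : V, w a b = w b a)
    (hpos : ∀ a b : V, G.Adj a b → 0 < w a b) (u v : V)
    (P : G.Walk u v) (hP : P.IsPath) (hPshort : P.wlength w = G.wdist w u v)
    (hPuniq : ∀ Q : G.Walk u v, Q.IsPath → Q.wlength w = G.wdist w u v → Q = P)
    (hnear : ∀ x : V, ∃! y : V, y ∈ P.support ∧
      G.wdist w x y = G.wdistS w x {z | z ∈ P.support})
    -- `Ti i` is a spanning tree of the induced subgraph `G[V_i]`, viewed as a graph on `V`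
    -- whose edges all lie inside `V_i`:
    (Ti : ℕ → SimpleGraph V)
    (hTle : ∀ i : ℕ, i ≤ P.length → Ti i ≤ G)
    (hTin : ∀ i : ℕ, i ≤ P.length → ∀ x y : V, (Ti i).Adj x y →
      x ∈ Vset G w P i ∧ y ∈ Vset G w P i)
    (hTacyc : ∀ i : ℕ, i ≤ P.length → (Ti i).IsAcyclic)
    (hTconn : ∀ i : ℕ, i ≤ P.length → ∀ x ∈ Vset G w P i, ∀ y ∈ Vset G w P i,
      (Ti i).Reachable x y) :
    SimpleGraph.fromEdgeSet
        ({e : Sym2 V | e ∈ P.edges} ∪ ⋃ i ∈ Set.Iic P.length, (Ti i).edgeSet) ≤ G ∧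
      (SimpleGraph.fromEdgeSet
        ({e : Sym2 V | e ∈ P.edges} ∪ ⋃ i ∈ Set.Iic P.length, (Ti i).edgeSet)).IsTree := by
  classical
  set k := P.length with hk
  set S : Set (Sym2 V) :=
    {e : Sym2 V | e ∈ P.edges} ∪ ⋃ i ∈ Set.Iic P.length, (Ti i).edgeSet with hS
  set T := SimpleGraph.fromEdgeSet S with hT
  -- basic positivity facts
  have hwl : ∀ {a b : V} (p : G.Walk a b), 0 ≤ p.wlength w := by
    intro a b p
    apply List.sum_nonneg
    intro r hr
    simp only [List.mem_map] at hr
    obtain ⟨d, hd, rfl⟩ := hr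
    exact (hpos _ _ d.adj).le
  have hwd_nonneg : ∀ a b : V, 0 ≤ G.wdist w a b := by
    intro a b
    rw [SimpleGraph.wdist]
    apply le_csInf
    · obtain ⟨p⟩ := hG.preconnected a b
      exact ⟨p.wlength w, p, rfl⟩
    · rintro r ⟨p, rfl⟩; exact hwl p
  have hwd_self : ∀ a : V, G.wdist w a a = 0 := by
    intro a
    refine le_antisymm ?_ (hwd_nonneg a a)
    rw [SimpleGraph.wdist]
    refine csInf_le ⟨0, ?_⟩ ⟨Walk.nil, by simp [SimpleGraph.Walk.wlength]⟩
    rintro r ⟨p, rfl⟩; exact hwl p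
  -- getVert i belongs to Vset i
  have hmemV : ∀ i ≤ k, P.getVert i ∈ Vset G w P i := by
    intro i hi
    have hsupp : P.getVert i ∈ P.support := getVert_mem_support' P hi
    have h1 : G.wdist w (P.getVert i) (P.getVert i) = 0 := hwd_self _
    have h2 : G.wdistS w (P.getVert i) {z | z ∈ P.support} = 0 := by
      rw [SimpleGraph.wdistS]
      refine le_antisymm ?_ ?_
      · calc sInf (G.wdist w (P.getVert i) '' {z | z ∈ P.support})
            ≤ G.wdist w (P.getVert i) (P.getVert i) :=
              csInf_le ⟨0, by rintro r ⟨y, -, rfl⟩; exact hwd_nonneg _ _⟩ ⟨_, hsupp, rfl⟩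
          _ = 0 := h1
      · refine le_csInf ⟨_, ⟨P.getVert i, hsupp, rfl⟩⟩ ?_
        rintro r ⟨y, -, rfl⟩; exact hwd_nonneg _ _
    show G.wdist w (P.getVert i) (P.getVert i)
        = G.wdistS w (P.getVert i) {z | z ∈ P.support}
    rw [h1, h2]
  -- the Vsets are pairwise disjoint
  have hdisj : ∀ i ≤ k, ∀ j ≤ k, ∀ x : V, x ∈ Vset G w P i → x ∈ Vset G w P j → i = j := by
    intro i hi j hj x hxi hxj
    obtain ⟨y, -, hy⟩ := hnear x
    have h1 : P.getVert i = y := hy _ ⟨getVert_mem_support' P hi, hxi⟩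
    have h2 : P.getVert j = y := hy _ ⟨getVert_mem_support' P hj, hxj⟩
    exact getVert_injOn' P hP i hi j hj (h1.trans h2.symm)
  -- the Vsets cover V
  have hcover : ∀ x : V, ∃ i, i ≤ k ∧ x ∈ Vset G w P i := by
    intro x
    obtain ⟨y, ⟨hy1, hy2⟩, -⟩ := hnear x
    obtain ⟨n, hn1, hn2⟩ := Walk.mem_support_iff_exists_getVert.mp hy1
    refine ⟨n, hn2, ?_⟩
    show G.wdist w x (P.getVert n) = G.wdistS w x {z | z ∈ P.support}
    rw [hn1]; exact hy2
  choose f hfk hfV using hcover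
  have hfV_eq : ∀ x : V, ∀ j ≤ k, x ∈ Vset G w P j → f x = j := by
    intro x j hj hx
    exact hdisj _ (hfk x) _ hj _ (hfV x) hx
  have hfgV : ∀ i ≤ k, f (P.getVert i) = i := fun i hi => hfV_eq _ _ hi (hmemV i hi)
  -- adjacency in T
  have hTadj : ∀ a b : V, T.Adj a b ↔ (s(a,b) ∈ S ∧ a ≠ b) := by
    intro a b; rw [hT, fromEdgeSet_adj]
  -- classification of edges of S
  have hclass : ∀ a b : V, s(a,b) ∈ S →
      (∃ j, j < k ∧ s(a,b) = s(P.getVert j, P.getVert (j+1)))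
      ∨ (∃ j, j ≤ k ∧ (Ti j).Adj a b) := by
    intro a b hab
    rcases (Set.mem_union _ _ _).mp hab with h | h
    · left; exact edges_mem_iff' P h
    · right
      simp only [Set.mem_iUnion, Set.mem_Iic, exists_prop] at h
      obtain ⟨j, hj, hje⟩ := h
      exact ⟨j, hj, hje⟩
  have hTif : ∀ j ≤ k, ∀ a b : V, (Ti j).Adj a b → f a = j ∧ f b = j := by
    intro j hj a b hab
    obtain ⟨ha, hb⟩ := hTin j hj a b hab
    exact ⟨hfV_eq _ _ hj ha, hfV_eq _ _ hj hb⟩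
  have hTiT : ∀ j ≤ k, Ti j ≤ T := by
    intro j hj a b hab
    rw [hTadj]
    exact ⟨Set.mem_union_right _ (Set.mem_biUnion (Set.mem_Iic.mpr hj) hab),
      (Ti j).ne_of_adj hab⟩
  have hPT : ∀ e ∈ P.edges, e ∈ T.edgeSet := by
    intro e he
    rw [hT, edgeSet_fromEdgeSet, Set.mem_diff]
    exact ⟨Set.mem_union_left _ he, G.not_isDiag_of_mem_edgeSet (P.edges_subset_edgeSet he)⟩
  -- T ≤ G
  have hTG : T ≤ G := by
    intro a b hab
    rw [hTadj] at hab
    obtain ⟨hS', hne⟩ := hab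
    rcases hclass a b hS' with ⟨j, hj, he⟩ | ⟨j, hj, he⟩
    · have : s(a,b) ∈ G.edgeSet := by
        rw [he]; exact P.edges_subset_edgeSet (getVert_edge_mem' P hj)
      exact this
    · exact hTle j hj he
  have hPTadj : ∀ j, j < k → T.Adj (P.getVert j) (P.getVert (j+1)) := by
    intro j hj
    rw [hTadj]
    exact ⟨Set.mem_union_left _ (getVert_edge_mem' P hj), (P.adj_getVert_succ hj).ne⟩
  -- connectivity
  have hreachPu : ∀ i ≤ k, T.Reachable u (P.getVert i) := by
    intro i hi
    exact ⟨(P.transfer T hPT).takeUntil _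
      (by rw [Walk.support_transfer]; exact getVert_mem_support' P hi)⟩
  have hreachxu : ∀ x : V, T.Reachable x u := by
    intro x
    have h1 : T.Reachable x (P.getVert (f x)) :=
      Reachable.mono (hTiT (f x) (hfk x))
        (hTconn (f x) (hfk x) x (hfV x) _ (hmemV (f x) (hfk x)))
    exact h1.trans (hreachPu (f x) (hfk x)).symm
  have hconn : T.Connected := by
    rw [connected_iff]
    exact ⟨fun x y => (hreachxu x).trans (hreachxu y).symm, ⟨u⟩⟩
  -- every path edge is a bridge of T
  have hbridge : ∀ i, i < k → T.IsBridge s(P.getVert i, P.getVert (i+1)) := by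
    intro i hi
    rw [isBridge_iff]
    rintro ⟨q⟩
    have key : ∀ a b : V,
        (T \ fromEdgeSet {s(P.getVert i, P.getVert (i+1))}).Adj a b →
        (f a ≤ i ↔ f b ≤ i) := by
      intro a b hab
      rw [sdiff_adj] at hab
      obtain ⟨hab, hnot⟩ := hab
      rw [hTadj] at hab
      obtain ⟨hSab, hne⟩ := hab
      have hnoteq : s(a,b) ≠ s(P.getVert i, P.getVert (i+1)) := by
        intro hcon
        exact hnot (by rw [fromEdgeSet_adj]; exact ⟨by rw [hcon]; rfl, hne⟩)
      rcases hclass a b hSab with ⟨j, hj, he⟩ | ⟨j, hj, he⟩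
      · have hji : j ≠ i := by
          rintro rfl; exact hnoteq he
        have hfj : f (P.getVert j) = j := hfgV j (le_of_lt hj)
        have hfj1 : f (P.getVert (j+1)) = j + 1 := hfgV (j+1) hj
        rw [Sym2.eq_iff] at he
        rcases he with ⟨rfl, rfl⟩ | ⟨rfl, rfl⟩
        · rw [hfj, hfj1]; omega
        · rw [hfj, hfj1]; omega
      · obtain ⟨hfa, hfb⟩ := hTif j hj a b he
        rw [hfa, hfb]
    have := walk_invariant' _ key q
    rw [hfgV i (le_of_lt hi), hfgV (i+1) hi] at this
    omega
  -- acyclicity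
  have hacyc : T.IsAcyclic := by
    intro x c hc
    by_cases hcase : ∃ e ∈ c.edges, e ∈ P.edges
    · obtain ⟨e, hce, hpe⟩ := hcase
      obtain ⟨j, hj, rfl⟩ := edges_mem_iff' P hpe
      exact (isBridge_iff_adj_and_forall_cycle_notMem (hPTadj j hj)).mp (hbridge j hj) c hc hce
    · push_neg at hcase
      have hall : ∀ (a b : V) (q : T.Walk a b), (∀ e ∈ q.edges, e ∉ P.edges) →
          ∀ e ∈ q.edges, e ∈ (Ti (f a)).edgeSet := by
        intro a b q
        induction q with
        | nil => intro _ e he; simp at he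
        | @cons a a' b h q ih =>
          intro hnp e he
          have hne : s(a, a') ∉ P.edges := hnp _ (by simp)
          have hTj : ∃ j, j ≤ k ∧ (Ti j).Adj a a' := by
            rcases hclass a a' ((hTadj a a').mp h).1 with ⟨j, hj, hje⟩ | hj
            · exact absurd (by rw [hje]; exact getVert_edge_mem' P hj) hne
            · exact hj
          obtain ⟨j, hj, hadj⟩ := hTj
          have hfa : f a = j := (hTif j hj a a' hadj).1
          have hfa' : f a' = j := (hTif j hj a a' hadj).2
          rw [Walk.edges_cons, List.mem_cons] at he
          rcases he with rfl | he
          · rw [hfa]; exact hadj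
          · have := ih (fun e' he' => hnp e' (by simp [he'])) e he
            rwa [hfa', ← hfa] at this
      have hsub : ∀ e ∈ c.edges, e ∈ (Ti (f x)).edgeSet := hall x x c hcase
      exact hTacyc (f x) (hfk x) (c.transfer _ hsub) (hc.transfer hsub)
  exact ⟨hTG, ⟨hconn, hacyc⟩⟩
end
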